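/- arXiv:0801.1221 — 5 statements merged into one kernel-verified Lean document; each statement's English description precedes it below -/
import Mathlib

section
/- Let ρ ∈ (0, 1/2) and set p_0 = 1 - ρ. Let a be a real random variable for which there exist real numbers x^- < x^+ with P(a > x^+) > ρ and P(a < x^-) > ρ. Then there exist a parameter p ∈ (1 - p_0, p_0), a measurable function f : (0,1) → ℝ, and a measurable function δ : (0,1) → (0, +∞) such that, if w is uniformly distributed on (0,1), ε is a Bernoulli random variable with P(ε = 1) = p and P(ε = 0) = 1 - p, and w and ε are independent, then the random variable f(w) + δ(w)·ε has the same distribution as a. -/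
open MeasureTheory ProbabilityTheory
open scoped ENNReal

/-- **Bernoulli decomposition of a non-degenerate random variable.**
If `a` is a real random variable with `P(a > x⁺) > ρ` and `P(a < x⁻) > ρ` for some
`x⁻ < x⁺` and `ρ ∈ (0, 1/2)`, then with `p₀ = 1 - ρ` there exist `p ∈ (1 - p₀, p₀)`
and measurable functions `f : (0,1) → ℝ`, `δ : (0,1) → (0,∞)` such that whenever `w`
is uniform on `(0,1)`, `ε` is Bernoulli with parameter `p` and `w, ε` are independent,
the random variable `f(w) + δ(w)·ε` has the same law as `a`. -/
theorem bernoulli_decomposition (ρ : ℝ) (hρ : ρ ∈ Set.Ioo (0 : ℝ) (1 / 2))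
    (p₀ : ℝ) (hp₀ : p₀ = 1 - ρ)
    (Ω : Type) [MeasureSpace Ω] [IsProbabilityMeasure (ℙ : Measure Ω)]
    (a : Ω → ℝ) (ha : Measurable a)
    (xm xp : ℝ) (hx : xm < xp)
    (hxp : ρ < (ℙ {ω | xp < a ω}).toReal) (hxm : ρ < (ℙ {ω | a ω < xm}).toReal) :
    ∃ (p : ℝ) (f δ : ℝ → ℝ),
      p ∈ Set.Ioo (1 - p₀) p₀ ∧
      Measurable f ∧ Measurable δ ∧ (∀ t ∈ Set.Ioo (0 : ℝ) 1, 0 < δ t) ∧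
      ∀ (Ω' : Type) (_ : MeasureSpace Ω') (_ : IsProbabilityMeasure (ℙ : Measure Ω'))
        (w ε : Ω' → ℝ), Measurable w → Measurable ε →
        Measure.map w ℙ = volume.restrict (Set.Ioo (0 : ℝ) 1) →
        (ℙ {ω' | ε ω' = 1} = ENNReal.ofReal p ∧ ℙ {ω' | ε ω' = 0} = ENNReal.ofReal (1 - p)) →
        IndepFun w ε ℙ →
        Measure.map (fun ω' => f (w ω') + δ (w ω') * ε ω') ℙ = Measure.map a ℙ := by
  classical
  set μ : Measure ℝ := Measure.map a ℙ with hμdef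
  haveI : IsProbabilityMeasure μ := Measure.isProbabilityMeasure_map ha.aemeasurable
  set F : ℝ → ℝ := fun x => cdf μ x with hFdef
  set c : ℝ := F xm with hcdef
  -- basic bounds on c
  have hFmono : Monotone F := monotone_cdf μ
  have hF0 : ∀ x, 0 ≤ F x := fun x => cdf_nonneg μ x
  have hF1 : ∀ x, F x ≤ 1 := fun x => cdf_le_one μ x
  have hFtoReal : ∀ x, F x = (μ (Set.Iic x)).toReal := fun x => cdf_eq_real μ x
  have hIio : μ (Set.Iio xm) = ℙ {ω | a ω < xm} := by
    rw [hμdef, Measure.map_apply ha measurableSet_Iio]; rfl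
  have hIoi : μ (Set.Ioi xp) = ℙ {ω | xp < a ω} := by
    rw [hμdef, Measure.map_apply ha measurableSet_Ioi]; rfl
  have hρc : ρ < c := by
    have h1 : (μ (Set.Iio xm)).toReal ≤ (μ (Set.Iic xm)).toReal :=
      ENNReal.toReal_mono (measure_ne_top _ _) (measure_mono Set.Iio_subset_Iic_self)
    rw [hcdef, hFtoReal]
    calc ρ < (μ (Set.Iio xm)).toReal := by rw [hIio]; exact hxm
    _ ≤ _ := h1
  have hcρ : c < 1 - ρ := by
    have hdisj : Disjoint (Set.Iic xm) (Set.Ioi xp) := Set.Iic_disjoint_Ioi hx.le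
    have hsum : μ (Set.Iic xm) + μ (Set.Ioi xp) ≤ 1 := by
      rw [← measure_union hdisj measurableSet_Ioi]
      have h := measure_mono (μ := μ) (Set.subset_univ (Set.Iic xm ∪ Set.Ioi xp))
      simpa using h
    have hsum' : (μ (Set.Iic xm)).toReal + (μ (Set.Ioi xp)).toReal ≤ 1 := by
      rw [← ENNReal.toReal_add (measure_ne_top _ _) (measure_ne_top _ _)]
      calc (μ (Set.Iic xm) + μ (Set.Ioi xp)).toReal ≤ (1 : ℝ≥0∞).toReal :=
            ENNReal.toReal_mono (by simp) hsum
      _ = 1 := by simp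
    have h2 : ρ < (μ (Set.Ioi xp)).toReal := by rw [hIoi]; exact hxp
    rw [hcdef, hFtoReal]; linarith
  have hc0 : 0 < c := lt_trans hρ.1 hρc
  have hc1 : c < 1 := by have := hρ.1; linarith
  have h1c : 0 < 1 - c := by linarith
  -- the quantile function
  set Q : ℝ → ℝ := fun u => sInf {x | u ≤ F x} with hQdef
  have hne : ∀ u : ℝ, u < 1 → {x | u ≤ F x}.Nonempty := by
    intro u hu
    obtain ⟨x, hx⟩ := ((tendsto_cdf_atTop μ).eventually_const_lt hu).exists
    exact ⟨x, hx.le⟩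
  have hbdd : ∀ u : ℝ, 0 < u → BddBelow {x | u ≤ F x} := by
    intro u hu
    obtain ⟨x₀, hx₀⟩ := ((tendsto_cdf_atBot μ).eventually_lt_const hu).exists
    refine ⟨x₀, fun x hx => ?_⟩
    by_contra hcon
    push_neg at hcon
    exact absurd (le_trans hx (hFmono hcon.le)) (not_le.mpr hx₀)
  have hmem : ∀ u : ℝ, 0 < u → u < 1 → u ≤ F (Q u) := by
    intro u hu0 hu1
    have htd : Filter.Tendsto F (nhdsWithin (Q u) (Set.Ioi (Q u))) (nhds (F (Q u))) :=
      ((cdf μ).right_continuous (Q u)).tendsto.mono_left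
        (nhdsWithin_mono _ Set.Ioi_subset_Ici_self)
    refine ge_of_tendsto htd ?_
    filter_upwards [self_mem_nhdsWithin] with y hy
    obtain ⟨x, hxmem, hxy⟩ := exists_lt_of_csInf_lt (hne u hu1) hy
    exact le_trans hxmem (hFmono hxy.le)
  have gc : ∀ u : ℝ, 0 < u → u < 1 → ∀ x : ℝ, (Q u ≤ x ↔ u ≤ F x) := by
    intro u hu0 hu1 x
    constructor
    · intro h
      exact le_trans (hmem u hu0 hu1) (hFmono h)
    · intro h
      exact csInf_le (hbdd u hu0) h
  have hQmono : ∀ u v : ℝ, 0 < u → v < 1 → u ≤ v → Q u ≤ Q v := by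
    intro u v hu hv huv
    exact (gc u hu (lt_of_le_of_lt huv hv) (Q v)).mpr
      (le_trans huv (hmem v (lt_of_lt_of_le hu huv) hv))
  -- the functions
  set f : ℝ → ℝ := fun t => if 0 < t then Q (c * min t 1) else 0 with hfdef
  set g : ℝ → ℝ := fun t => if t < 1 then Q (c + (1 - c) * max t 0) else 0 with hgdef
  set δ : ℝ → ℝ := fun t => g t - f t with hδdef
  -- measurability
  have hfm : Measurable f := by
    apply measurable_of_Iic
    intro y
    have hT : MeasurableSet {t : ℝ | 0 < t ∧ Q (c * min t 1) ≤ y} := by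
      apply Set.OrdConnected.measurableSet
      constructor
      rintro a₁ ⟨ha1, ha2⟩ b₁ ⟨hb1, hb2⟩ z ⟨hza, hzb⟩
      have hz0 : 0 < z := lt_of_lt_of_le ha1 hza
      refine ⟨hz0, le_trans ?_ hb2⟩
      apply hQmono
      · exact mul_pos hc0 (lt_min hz0 one_pos)
      · calc c * min b₁ 1 ≤ c * 1 := mul_le_mul_of_nonneg_left (min_le_right _ _) hc0.le
          _ < 1 := by linarith
      · exact mul_le_mul_of_nonneg_left (min_le_min hzb le_rfl) hc0.le
    by_cases hy : (0:ℝ) ≤ y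
    · have hset : f ⁻¹' Set.Iic y = Set.Iic 0 ∪ {t : ℝ | 0 < t ∧ Q (c * min t 1) ≤ y} := by
        ext t
        simp only [Set.mem_preimage, Set.mem_Iic, Set.mem_union, Set.mem_setOf_eq, hfdef]
        by_cases ht : 0 < t
        · simp only [if_pos ht]
          constructor
          · intro h; exact Or.inr ⟨ht, h⟩
          · rintro (h | ⟨_, h⟩)
            · linarith
            · exact h
        · simp only [if_neg ht]
          push_neg at ht
          exact ⟨fun _ => Or.inl ht, fun _ => hy⟩
      rw [hset]; exact measurableSet_Iic.union hT
    · have hset : f ⁻¹' Set.Iic y = {t : ℝ | 0 < t ∧ Q (c * min t 1) ≤ y} := by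
        ext t
        simp only [Set.mem_preimage, Set.mem_Iic, Set.mem_setOf_eq, hfdef]
        by_cases ht : 0 < t
        · simp only [if_pos ht]
          exact ⟨fun h => ⟨ht, h⟩, fun h => h.2⟩
        · simp only [if_neg ht]
          constructor
          · intro h; exact absurd h hy
          · rintro ⟨h, _⟩; exact absurd h ht
      rw [hset]; exact hT
  have hgm : Measurable g := by
    apply measurable_of_Iic
    intro y
    have hT : MeasurableSet {t : ℝ | t < 1 ∧ Q (c + (1 - c) * max t 0) ≤ y} := by
      apply Set.OrdConnected.measurableSet
      constructor
      rintro a₁ ⟨ha1, ha2⟩ b₁ ⟨hb1, hb2⟩ z ⟨hza, hzb⟩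
      have hz1 : z < 1 := lt_of_le_of_lt hzb hb1
      refine ⟨hz1, le_trans ?_ hb2⟩
      apply hQmono
      · have h5 : (0:ℝ) ≤ (1 - c) * max z 0 := mul_nonneg h1c.le (le_max_right _ _)
        linarith
      · have hmax : max b₁ 0 < 1 := max_lt hb1 one_pos
        have h5 : (1 - c) * max b₁ 0 < (1 - c) * 1 := by
          exact mul_lt_mul_of_pos_left hmax h1c
        linarith
      · have h5 : max z 0 ≤ max b₁ 0 := max_le_max hzb (le_refl (0:ℝ))
        have h6 : (1 - c) * max z 0 ≤ (1 - c) * max b₁ 0 :=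
          mul_le_mul_of_nonneg_left h5 h1c.le
        linarith
    by_cases hy : (0:ℝ) ≤ y
    · have hset : g ⁻¹' Set.Iic y
          = Set.Ici 1 ∪ {t : ℝ | t < 1 ∧ Q (c + (1 - c) * max t 0) ≤ y} := by
        ext t
        simp only [Set.mem_preimage, Set.mem_Iic, Set.mem_union, Set.mem_Ici, Set.mem_setOf_eq,
          hgdef]
        by_cases ht : t < 1
        · simp only [if_pos ht]
          constructor
          · intro h; exact Or.inr ⟨ht, h⟩
          · rintro (h | ⟨_, h⟩)
            · linarith
            · exact h
        · simp only [if_neg ht]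
          push_neg at ht
          exact ⟨fun _ => Or.inl ht, fun _ => hy⟩
      rw [hset]; exact measurableSet_Ici.union hT
    · have hset : g ⁻¹' Set.Iic y = {t : ℝ | t < 1 ∧ Q (c + (1 - c) * max t 0) ≤ y} := by
        ext t
        simp only [Set.mem_preimage, Set.mem_Iic, Set.mem_setOf_eq, hgdef]
        by_cases ht : t < 1
        · simp only [if_pos ht]
          exact ⟨fun h => ⟨ht, h⟩, fun h => h.2⟩
        · simp only [if_neg ht]
          constructor
          · intro h; exact absurd h hy
          · rintro ⟨h, _⟩; exact absurd h ht
      rw [hset]; exact hT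
  have hδm : Measurable δ := hgm.sub hfm
  -- value identities on (0,1)
  have hfval : ∀ t ∈ Set.Ioo (0:ℝ) 1, f t = Q (c * t) := by
    rintro t ⟨ht0, ht1⟩
    simp only [hfdef, if_pos ht0, min_eq_left ht1.le]
  have hgval : ∀ t ∈ Set.Ioo (0:ℝ) 1, g t = Q (c + (1 - c) * t) := by
    rintro t ⟨ht0, ht1⟩
    simp only [hgdef, if_pos ht1, max_eq_left ht0.le]
  -- positivity of δ
  have hδpos : ∀ t ∈ Set.Ioo (0:ℝ) 1, 0 < δ t := by
    rintro t ht
    obtain ⟨ht0, ht1⟩ := ht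
    have hfx : f t ≤ xm := by
      rw [hfval t ⟨ht0, ht1⟩]
      refine (gc (c * t) (mul_pos hc0 ht0) (by nlinarith) xm).mpr ?_
      rw [← hcdef]
      nlinarith
    have hgx : xm < g t := by
      rw [hgval t ⟨ht0, ht1⟩]
      by_contra hcon
      push_neg at hcon
      have := (gc (c + (1 - c) * t) (by nlinarith) (by nlinarith) xm).mp hcon
      rw [← hcdef] at this
      nlinarith
    show 0 < g t - f t
    linarith
  refine ⟨1 - c, f, δ, ?_, hfm, hδm, hδpos, ?_⟩
  · rw [hp₀]
    simp only [Set.mem_Ioo]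
    constructor <;> linarith
  intro Ω' mΩ' hprob' w ε hw hε hmap hbern hindep
  obtain ⟨hε1, hε0⟩ := hbern
  have h1c' : (1:ℝ) - (1 - c) = c := by ring
  rw [h1c'] at hε0
  set X : Ω' → ℝ := fun ω' => f (w ω') + δ (w ω') * ε ω' with hXdef
  have hX : Measurable X := (hfm.comp hw).add ((hδm.comp hw).mul hε)
  haveI : IsProbabilityMeasure (Measure.map X ℙ) := Measure.isProbabilityMeasure_map hX.aemeasurable
  refine Measure.ext_of_Iic (Measure.map X ℙ) (Measure.map a ℙ) (fun y => ?_)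
  rw [Measure.map_apply hX measurableSet_Iic]
  have hRHS : Measure.map a ℙ (Set.Iic y) = ENNReal.ofReal (F y) := by
    rw [← hμdef, ← ofReal_cdf μ y]
  rw [hRHS]
  -- decompose by the value of ε
  have hAm : MeasurableSet (ε ⁻¹' {0}) := hε (measurableSet_singleton 0)
  have hBm : MeasurableSet (ε ⁻¹' {1}) := hε (measurableSet_singleton 1)
  have hABdisj : Disjoint (ε ⁻¹' ({0} : Set ℝ)) (ε ⁻¹' {1}) := by
    rw [Set.disjoint_left]
    rintro ω h0 h1
    simp only [Set.mem_preimage, Set.mem_singleton_iff] at h0 h1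
    rw [h0] at h1; norm_num at h1
  have hPA : ℙ (ε ⁻¹' {0}) = ENNReal.ofReal c := by
    rw [← hε0]; rfl
  have hPB : ℙ (ε ⁻¹' {1}) = ENNReal.ofReal (1 - c) := by
    rw [← hε1]; rfl
  have hABfull : ℙ ((ε ⁻¹' {0} ∪ ε ⁻¹' {1} : Set Ω')ᶜ) = 0 := by
    rw [measure_compl (hAm.union hBm) (measure_ne_top _ _),
      measure_union hABdisj hBm, hPA, hPB, ← ENNReal.ofReal_add (by linarith) (by linarith)]
    norm_num
  have hSm : MeasurableSet (X ⁻¹' Set.Iic y) := hX measurableSet_Iic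
  have hsplit : ℙ (X ⁻¹' Set.Iic y)
      = ℙ (X ⁻¹' Set.Iic y ∩ ε ⁻¹' {0}) + ℙ (X ⁻¹' Set.Iic y ∩ ε ⁻¹' {1}) := by
    have h1 : ℙ (X ⁻¹' Set.Iic y ∩ (ε ⁻¹' {0} ∪ ε ⁻¹' {1}))
        + ℙ (X ⁻¹' Set.Iic y \ (ε ⁻¹' {0} ∪ ε ⁻¹' {1})) = ℙ (X ⁻¹' Set.Iic y) :=
      measure_inter_add_diff _ (hAm.union hBm)
    have h2 : ℙ (X ⁻¹' Set.Iic y \ (ε ⁻¹' {0} ∪ ε ⁻¹' {1})) = 0 :=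
      measure_mono_null (fun ω hω => hω.2) hABfull
    have h3 : X ⁻¹' Set.Iic y ∩ (ε ⁻¹' {0} ∪ ε ⁻¹' {1})
        = (X ⁻¹' Set.Iic y ∩ ε ⁻¹' {0}) ∪ (X ⁻¹' Set.Iic y ∩ ε ⁻¹' {1}) :=
      Set.inter_union_distrib_left _ _ _
    have h4 : ℙ ((X ⁻¹' Set.Iic y ∩ ε ⁻¹' {0}) ∪ (X ⁻¹' Set.Iic y ∩ ε ⁻¹' {1}))
        = ℙ (X ⁻¹' Set.Iic y ∩ ε ⁻¹' {0}) + ℙ (X ⁻¹' Set.Iic y ∩ ε ⁻¹' {1}) :=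
      measure_union (hABdisj.mono Set.inter_subset_right Set.inter_subset_right)
        (hSm.inter hBm)
    rw [← h1, h2, add_zero, h3, h4]
  -- rewrite the two pieces
  have hSA : X ⁻¹' Set.Iic y ∩ ε ⁻¹' {0} = w ⁻¹' (f ⁻¹' Set.Iic y) ∩ ε ⁻¹' {0} := by
    ext ω
    simp only [Set.mem_inter_iff, Set.mem_preimage, Set.mem_Iic,
      Set.mem_singleton_iff, hXdef]
    constructor
    · rintro ⟨h1, h2⟩
      rw [h2, mul_zero, add_zero] at h1
      exact ⟨h1, h2⟩
    · rintro ⟨h1, h2⟩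
      refine ⟨?_, h2⟩
      rw [h2, mul_zero, add_zero]
      exact h1
  have hSB : X ⁻¹' Set.Iic y ∩ ε ⁻¹' {1} = w ⁻¹' (g ⁻¹' Set.Iic y) ∩ ε ⁻¹' {1} := by
    ext ω
    simp only [Set.mem_inter_iff, Set.mem_preimage, Set.mem_Iic,
      Set.mem_singleton_iff, hXdef, hδdef]
    constructor
    · rintro ⟨h1, h2⟩
      rw [h2] at h1
      refine ⟨by linarith, h2⟩
    · rintro ⟨h1, h2⟩
      refine ⟨?_, h2⟩
      rw [h2]
      linarith
  -- independence
  have hfS : MeasurableSet (f ⁻¹' Set.Iic y) := hfm measurableSet_Iic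
  have hgS : MeasurableSet (g ⁻¹' Set.Iic y) := hgm measurableSet_Iic
  have hind0 : ℙ (w ⁻¹' (f ⁻¹' Set.Iic y) ∩ ε ⁻¹' {0})
      = ℙ (w ⁻¹' (f ⁻¹' Set.Iic y)) * ℙ (ε ⁻¹' {0}) :=
    hindep.measure_inter_preimage_eq_mul _ _ hfS (measurableSet_singleton 0)
  have hind1 : ℙ (w ⁻¹' (g ⁻¹' Set.Iic y) ∩ ε ⁻¹' {1})
      = ℙ (w ⁻¹' (g ⁻¹' Set.Iic y)) * ℙ (ε ⁻¹' {1}) :=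
    hindep.measure_inter_preimage_eq_mul _ _ hgS (measurableSet_singleton 1)
  -- volumes
  have hvol : ∀ s : ℝ, volume (Set.Ioo (0:ℝ) 1 ∩ Set.Iic s) = ENNReal.ofReal (min s 1) := by
    intro s
    by_cases h1 : 1 ≤ s
    · have : Set.Ioo (0:ℝ) 1 ∩ Set.Iic s = Set.Ioo 0 1 := by
        apply Set.inter_eq_left.mpr
        intro t ht
        exact le_trans ht.2.le h1
      rw [this, Real.volume_Ioo, min_eq_right h1]
      norm_num
    · push_neg at h1
      have : Set.Ioo (0:ℝ) 1 ∩ Set.Iic s = Set.Ioc 0 s := by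
        ext t
        simp only [Set.mem_inter_iff, Set.mem_Ioo, Set.mem_Iic, Set.mem_Ioc]
        constructor
        · rintro ⟨⟨h2, _⟩, h3⟩; exact ⟨h2, h3⟩
        · rintro ⟨h2, h3⟩; exact ⟨⟨h2, lt_of_le_of_lt h3 h1⟩, h3⟩
      rw [this, Real.volume_Ioc, min_eq_left h1.le, sub_zero]
  have hmapw : ∀ (s : Set ℝ), MeasurableSet s → ℙ (w ⁻¹' s) = volume (s ∩ Set.Ioo (0:ℝ) 1) := by
    intro s hs
    rw [← Measure.map_apply hw hs, hmap, Measure.restrict_apply hs]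
  -- compute the first piece
  have hsetf : f ⁻¹' Set.Iic y ∩ Set.Ioo (0:ℝ) 1 = Set.Ioo (0:ℝ) 1 ∩ Set.Iic (F y / c) := by
    ext t
    simp only [Set.mem_inter_iff, Set.mem_preimage, Set.mem_Iic, Set.mem_Ioo]
    constructor
    · rintro ⟨h1, h2⟩
      refine ⟨h2, ?_⟩
      rw [hfval t h2] at h1
      have := (gc (c * t) (mul_pos hc0 h2.1) (by nlinarith [h2.2]) y).mp h1
      rw [le_div_iff₀ hc0]
      linarith [this]
    · rintro ⟨h2, h1⟩
      refine ⟨?_, h2⟩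
      rw [hfval t h2]
      refine (gc (c * t) (mul_pos hc0 h2.1) (by nlinarith [h2.2]) y).mpr ?_
      rw [le_div_iff₀ hc0] at h1
      linarith
  have hsetg : g ⁻¹' Set.Iic y ∩ Set.Ioo (0:ℝ) 1
      = Set.Ioo (0:ℝ) 1 ∩ Set.Iic ((F y - c) / (1 - c)) := by
    ext t
    simp only [Set.mem_inter_iff, Set.mem_preimage, Set.mem_Iic, Set.mem_Ioo]
    constructor
    · rintro ⟨h1, h2⟩
      refine ⟨h2, ?_⟩
      rw [hgval t h2] at h1
      have := (gc (c + (1 - c) * t) (by nlinarith [h2.1]) (by nlinarith [h2.2]) y).mp h1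
      rw [le_div_iff₀ h1c]
      linarith [this]
    · rintro ⟨h2, h1⟩
      refine ⟨?_, h2⟩
      rw [hgval t h2]
      refine (gc (c + (1 - c) * t) (by nlinarith [h2.1]) (by nlinarith [h2.2]) y).mpr ?_
      rw [le_div_iff₀ h1c] at h1
      linarith
  have hterm0 : ℙ (X ⁻¹' Set.Iic y ∩ ε ⁻¹' {0}) = ENNReal.ofReal (min (F y) c) := by
    rw [hSA, hind0, hmapw _ hfS, hsetf, hvol, hPA, ← ENNReal.ofReal_mul' hc0.le]
    congr 1
    rw [min_mul_of_nonneg _ _ hc0.le, div_mul_cancel₀ _ hc0.ne', one_mul]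
  have hterm1 : ℙ (X ⁻¹' Set.Iic y ∩ ε ⁻¹' {1}) = ENNReal.ofReal (min (F y - c) (1 - c)) := by
    rw [hSB, hind1, hmapw _ hgS, hsetg, hvol, hPB, ← ENNReal.ofReal_mul' h1c.le]
    congr 1
    rw [min_mul_of_nonneg _ _ h1c.le, div_mul_cancel₀ _ h1c.ne', one_mul]
  rw [hsplit, hterm0, hterm1]
  rcases le_or_gt (F y) c with hyc | hyc
  · rw [min_eq_left hyc]
    have : ENNReal.ofReal (min (F y - c) (1 - c)) = 0 := by
      rw [min_eq_left (by linarith)]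
      exact ENNReal.ofReal_eq_zero.mpr (by linarith)
    rw [this, add_zero]
  · rw [min_eq_right hyc.le, min_eq_left (by linarith [hF1 y]),
      ← ENNReal.ofReal_add hc0.le (by linarith)]
    congr 1
    ring
end

section
/- Let p_0 ∈ (1/2, 1). There exists a constant C > 0 (depending only on p_0) such that: for every s ≥ 1, every choice of nonzero real numbers α_1, …, α_s, every real number b, and every family ε_1, …, ε_s of independent Bernoulli random variables with parameters p_1, …, p_s all lying in the interval (1 - p_0, p_0), one has P(α_1 ε_1 + ⋯ + α_s ε_s = b) ≤ C / √s. -/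
open Finset

private lemma cb_sq : ∀ n : ℕ, (Nat.centralBinom n)^2 * (2*n+1) ≤ 16^n := by
  intro n
  induction n with
  | zero => simp [Nat.centralBinom]
  | succ n ih =>
    have h := Nat.succ_mul_centralBinom_succ n
    have key : (Nat.centralBinom (n+1))^2 * (2*(n+1)+1) * (n+1)^2 ≤ 16^(n+1) * (n+1)^2 := by
      have h2 : (Nat.centralBinom (n+1))^2 * (n+1)^2 = 4 * (2*n+1)^2 * (Nat.centralBinom n)^2 := by
        have : ((n+1) * Nat.centralBinom (n+1))^2 = (2 * (2*n+1) * Nat.centralBinom n)^2 := by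
          rw [h]
        ring_nf at this ⊢
        nlinarith [this]
      calc (Nat.centralBinom (n+1))^2 * (2*(n+1)+1) * (n+1)^2
          = 4 * (2*n+1)^2 * (Nat.centralBinom n)^2 * (2*n+3) := by
            rw [mul_right_comm, h2]; ring_nf
        _ ≤ 4 * (2*n+1) * (2*n+3) * 16^n := by
            nlinarith [ih, Nat.zero_le (Nat.centralBinom n)]
        _ ≤ 16^(n+1) * (n+1)^2 := by
            rw [pow_succ]
            nlinarith [pow_pos (show 0 < 16 by norm_num) n]
    exact Nat.le_of_mul_le_mul_right key (by positivity)

private lemma choose_double_succ (n : ℕ) :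
    2 * Nat.choose (2*n+1) n = Nat.centralBinom (n+1) := by
  rw [Nat.centralBinom]
  have e1 : 2 * (n+1) = (2*n+1) + 1 := by ring
  rw [e1]
  have pascal : Nat.choose ((2*n+1)+1) (n+1) = Nat.choose (2*n+1) n + Nat.choose (2*n+1) (n+1) :=
    Nat.choose_succ_succ (2*n+1) n ▸ rfl
  rw [pascal]
  have symm : Nat.choose (2*n+1) (n+1) = Nat.choose (2*n+1) n := by
    have h := Nat.choose_symm (show n+1 ≤ 2*n+1 by omega)
    have : 2*n+1 - (n+1) = n := by omega
    rw [this] at h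
    omega
  omega

private lemma choose_half_sq (m : ℕ) : (m.choose (m/2))^2 * (m+1) ≤ 4^m := by
  rcases Nat.even_or_odd m with ⟨n, hn⟩ | ⟨n, hn⟩
  · subst hn
    have h1 : n + n = 2 * n := by ring
    have h2 : (n + n) / 2 = n := by omega
    rw [h2]
    calc (Nat.choose (n+n) n)^2 * (n+n+1) = (Nat.centralBinom n)^2 * (2*n+1) := by
          rw [Nat.centralBinom, h1]
      _ ≤ 16^n := cb_sq n
      _ = 4^(n+n) := by rw [show (16:ℕ) = 4^2 by norm_num, ← pow_mul]; ring_nf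
  · subst hn
    have h2 : (2*n+1) / 2 = n := by omega
    rw [h2]
    have key : (Nat.choose (2*n+1) n)^2 * ((2*n+1)+1) * 4 ≤ 4^(2*n+1) * 4 := by
      calc (Nat.choose (2*n+1) n)^2 * ((2*n+1)+1) * 4
          = (2 * Nat.choose (2*n+1) n)^2 * (2*n+2) := by ring
        _ = (Nat.centralBinom (n+1))^2 * (2*n+2) := by rw [choose_double_succ]
        _ ≤ (Nat.centralBinom (n+1))^2 * (2*(n+1)+1) := by
            apply Nat.mul_le_mul_left; omega
        _ ≤ 16^(n+1) := cb_sq (n+1)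
        _ = 4^(2*n+1) * 4 := by
            rw [show (16:ℕ) = 4^2 by norm_num, ← pow_mul]; ring_nf
    exact Nat.le_of_mul_le_mul_right key (by norm_num)

private lemma choose_half_div (m : ℕ) :
    (m.choose (m/2) : ℝ) / 2^m ≤ 1 / Real.sqrt (m+1) := by
  have H := choose_half_sq m
  have hm1 : (0:ℝ) < Real.sqrt (m+1) := Real.sqrt_pos.mpr (by positivity)
  rw [div_le_div_iff₀ (by positivity) hm1, one_mul]
  have hsq : ((m.choose (m/2) : ℝ) * Real.sqrt (m+1))^2 ≤ ((2:ℝ)^m)^2 := by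
    rw [mul_pow, Real.sq_sqrt (by positivity), ← pow_mul, show m*2 = 2*m by ring, pow_mul]
    norm_num
    calc ((m.choose (m/2) : ℝ))^2 * (m+1) = (((m.choose (m/2))^2 * (m+1) : ℕ) : ℝ) := by
          push_cast; ring
      _ ≤ ((4^m : ℕ) : ℝ) := by exact_mod_cast H
      _ = (4:ℝ)^m := by push_cast; ring
  have h1 : (0:ℝ) ≤ (m.choose (m/2) : ℝ) * Real.sqrt (m+1) := by positivity
  nlinarith [hsq, pow_pos (show (0:ℝ) < 2 by norm_num) m]

private lemma sperner_subset {α : Type*} [DecidableEq α] (T : Finset α) (ℬ : Finset (Finset α))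
    (hsub : ∀ B ∈ ℬ, B ⊆ T) (hanti : IsAntichain (· ⊆ ·) (ℬ : Set (Finset α))) :
    ℬ.card ≤ T.card.choose (T.card / 2) := by
  set f : Finset α → Finset {x // x ∈ T} := fun B => B.subtype (· ∈ T) with hf
  have hback : ∀ B ∈ ℬ, (f B).map (Function.Embedding.subtype _) = B := fun B hB =>
    Finset.subtype_map_of_mem (fun x hx => hsub B hB hx)
  have hinj : Set.InjOn f ℬ := by
    intro B₁ h₁ B₂ h₂ he
    rw [← hback B₁ h₁, ← hback B₂ h₂, he]
  have hcard : ℬ.card = (ℬ.image f).card := (Finset.card_image_of_injOn hinj).symm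
  have hanti' : IsAntichain (· ⊆ ·) ((ℬ.image f : Finset (Finset {x // x ∈ T})) :
      Set (Finset {x // x ∈ T})) := by
    intro X hX Y hY hne hsubXY
    simp only [Finset.coe_image, Set.mem_image, Finset.mem_coe] at hX hY
    obtain ⟨B₁, h₁, rfl⟩ := hX
    obtain ⟨B₂, h₂, rfl⟩ := hY
    have hB : B₁ ⊆ B₂ := by
      rw [← hback B₁ h₁, ← hback B₂ h₂]
      exact Finset.map_subset_map.mpr hsubXY
    exact hanti h₁ h₂ (fun h => hne (by rw [h])) hB
  have := IsAntichain.sperner hanti'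
  rwa [← hcard, Fintype.card_coe] at this

private lemma antichain_inner {ι : Type*} [Fintype ι] [DecidableEq ι]
    (c c' : ι → ℝ) (hc : ∀ i, 0 ≤ c i) (hc' : ∀ i, 0 ≤ c' i)
    (𝒜 : Finset (Finset ι)) (hA : IsAntichain (· ⊆ ·) (𝒜 : Set (Finset ι)))
    (T : Finset ι) :
    ∑ S ∈ 𝒜, ∏ i ∈ Tᶜ, (if i ∈ S then c i else c' i) ≤
      (T.card.choose (T.card / 2)) * ∏ i ∈ Tᶜ, (c i + c' i) := by
  classical
  set F : Finset ι → ℝ := fun R => (∏ i ∈ R, c i) * ∏ i ∈ Tᶜ \ R, c' i with hF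
  have hFnonneg : ∀ R, 0 ≤ F R := fun R => by
    apply mul_nonneg <;> exact Finset.prod_nonneg (fun i _ => by first | exact hc i | exact hc' i)
  have hterm : ∀ S : Finset ι,
      (∏ i ∈ Tᶜ, (if i ∈ S then c i else c' i)) = F (S ∩ Tᶜ) := by
    intro S
    rw [Finset.prod_ite]
    congr 1
    · apply Finset.prod_congr _ (fun _ _ => rfl)
      rw [Finset.filter_mem_eq_inter, Finset.inter_comm]
    · apply Finset.prod_congr _ (fun _ _ => rfl)
      ext x
      simp only [Finset.mem_filter, Finset.mem_sdiff, Finset.mem_inter]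
      tauto
  have hmaps : ∀ S ∈ 𝒜, S ∩ Tᶜ ∈ Tᶜ.powerset := fun S _ =>
    Finset.mem_powerset.mpr Finset.inter_subset_right
  have hfiber := Finset.sum_fiberwise_of_maps_to hmaps (fun S => F (S ∩ Tᶜ))
  have hcount : ∀ R ∈ Tᶜ.powerset,
      (𝒜.filter (fun S => S ∩ Tᶜ = R)).card ≤ T.card.choose (T.card / 2) := by
    intro R _
    set fib := 𝒜.filter (fun S => S ∩ Tᶜ = R) with hfib
    have hrec : ∀ S ∈ fib, (S ∩ T) ∪ R = S := by
      intro S hS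
      obtain ⟨_, hR⟩ := Finset.mem_filter.mp hS
      rw [← hR, ← Finset.inter_union_distrib_left, Finset.union_compl, Finset.inter_univ]
    have hinj : Set.InjOn (· ∩ T) fib := by
      intro S₁ h₁ S₂ h₂ he
      rw [← hrec S₁ h₁, ← hrec S₂ h₂]
      simp only at he
      rw [he]
    rw [hfib] at hinj ⊢
    calc (𝒜.filter (fun S => S ∩ Tᶜ = R)).card
        = ((𝒜.filter (fun S => S ∩ Tᶜ = R)).image (· ∩ T)).card :=
          (Finset.card_image_of_injOn hinj).symm
      _ ≤ T.card.choose (T.card / 2) := by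
          apply sperner_subset T
          · intro B hB
            obtain ⟨S, _, rfl⟩ := Finset.mem_image.mp hB
            exact Finset.inter_subset_right
          · intro X hX Y hY hne hsubXY
            simp only [Finset.coe_image, Set.mem_image, Finset.mem_coe] at hX hY
            obtain ⟨S₁, h₁, rfl⟩ := hX
            obtain ⟨S₂, h₂, rfl⟩ := hY
            rw [← hfib] at h₁ h₂
            have hS : S₁ ⊆ S₂ := by
              rw [← hrec S₁ h₁, ← hrec S₂ h₂]
              exact Finset.union_subset_union_left hsubXY
            have hne' : S₁ ≠ S₂ := fun h => hne (by rw [h])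
            exact hA (Finset.mem_filter.mp ((hfib ▸ h₁))).1
              (Finset.mem_filter.mp ((hfib ▸ h₂))).1 hne' hS
  calc ∑ S ∈ 𝒜, ∏ i ∈ Tᶜ, (if i ∈ S then c i else c' i)
      = ∑ S ∈ 𝒜, F (S ∩ Tᶜ) := Finset.sum_congr rfl (fun S _ => hterm S)
    _ = ∑ R ∈ Tᶜ.powerset, ∑ S ∈ 𝒜.filter (fun S => S ∩ Tᶜ = R), F (S ∩ Tᶜ) := hfiber.symm
    _ ≤ ∑ R ∈ Tᶜ.powerset, (T.card.choose (T.card / 2) : ℝ) * F R := by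
        apply Finset.sum_le_sum
        intro R hR
        have : ∑ S ∈ 𝒜.filter (fun S => S ∩ Tᶜ = R), F (S ∩ Tᶜ)
            = (𝒜.filter (fun S => S ∩ Tᶜ = R)).card • F R := by
          rw [← Finset.sum_const]
          apply Finset.sum_congr rfl
          intro S hS
          rw [(Finset.mem_filter.mp hS).2]
        rw [this, nsmul_eq_mul]
        exact mul_le_mul_of_nonneg_right (by exact_mod_cast hcount R hR) (hFnonneg R)
    _ = (T.card.choose (T.card / 2) : ℝ) * ∑ R ∈ Tᶜ.powerset, F R := by
        rw [Finset.mul_sum]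
    _ = (T.card.choose (T.card / 2)) * ∏ i ∈ Tᶜ, (c i + c' i) := by
        rw [Finset.prod_add]

private lemma antichain_weight {ι : Type*} [Fintype ι] [DecidableEq ι] (q : ℝ) (hq : 0 ≤ q)
    (c c' : ι → ℝ) (hc : ∀ i, 0 ≤ c i) (hc' : ∀ i, 0 ≤ c' i)
    (𝒜 : Finset (Finset ι)) (hA : IsAntichain (· ⊆ ·) (𝒜 : Set (Finset ι))) :
    ∑ S ∈ 𝒜, ∏ i, ((if i ∈ S then c i else c' i) + q) ≤
      ∑ T ∈ (univ : Finset ι).powerset,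
        q ^ T.card * ((T.card.choose (T.card / 2)) * ∏ i ∈ Tᶜ, (c i + c' i)) := by
  classical
  have hexp : ∀ S : Finset ι, ∏ i, ((if i ∈ S then c i else c' i) + q)
      = ∑ T ∈ (univ : Finset ι).powerset,
          q ^ T.card * ∏ i ∈ Tᶜ, (if i ∈ S then c i else c' i) := by
    intro S
    have h := Finset.prod_add (fun _ : ι => q) (fun i => if i ∈ S then c i else c' i) univ
    simp only [Finset.prod_const] at h
    calc ∏ i, ((if i ∈ S then c i else c' i) + q)
        = ∏ i, (q + (if i ∈ S then c i else c' i)) := by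
          apply Finset.prod_congr rfl; intros; rw [add_comm]
      _ = ∑ T ∈ (univ : Finset ι).powerset,
            q ^ T.card * ∏ i ∈ univ \ T, (if i ∈ S then c i else c' i) := h
      _ = _ := by
          apply Finset.sum_congr rfl
          intro T _
          rw [← Finset.compl_eq_univ_sdiff]
  calc ∑ S ∈ 𝒜, ∏ i, ((if i ∈ S then c i else c' i) + q)
      = ∑ S ∈ 𝒜, ∑ T ∈ (univ : Finset ι).powerset,
          q ^ T.card * ∏ i ∈ Tᶜ, (if i ∈ S then c i else c' i) :=
        Finset.sum_congr rfl (fun S _ => hexp S)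
    _ = ∑ T ∈ (univ : Finset ι).powerset,
          q ^ T.card * ∑ S ∈ 𝒜, ∏ i ∈ Tᶜ, (if i ∈ S then c i else c' i) := by
        rw [Finset.sum_comm]
        exact Finset.sum_congr rfl (fun T _ => (Finset.mul_sum _ _ _).symm)
    _ ≤ _ := by
        apply Finset.sum_le_sum
        intro T _
        exact mul_le_mul_of_nonneg_left (antichain_inner c c' hc hc' 𝒜 hA T) (by positivity)

private lemma powerset_to_range {s : ℕ} (f : ℕ → ℝ) :
    ∑ T ∈ (univ : Finset (Fin s)).powerset, f T.card
      = ∑ k ∈ Finset.range (s+1), (s.choose k : ℝ) * f k := by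
  classical
  rw [Finset.powerset_card_disjiUnion]; erw [Finset.sum_disjiUnion]
  rw [Finset.card_univ, Fintype.card_fin]
  apply Finset.sum_congr rfl
  intro k _
  rw [Finset.sum_congr rfl (fun T hT => by
    rw [(Finset.mem_powersetCard.mp hT).2]), Finset.sum_const, Finset.card_powersetCard,
    Finset.card_univ, Fintype.card_fin, nsmul_eq_mul]

private lemma binom_sqrt_sum (q : ℝ) (hq0 : 0 < q) (hq1 : q < 1) (s : ℕ) :
    ∑ k ∈ Finset.range (s+1), (s.choose k : ℝ) * q^k * (1-q)^(s-k) * (1 / Real.sqrt (k+1))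
      ≤ 1 / Real.sqrt (q * (s+1)) := by
  have h1q : (0:ℝ) ≤ 1 - q := by linarith
  set w : ℕ → ℝ := fun k => (s.choose k : ℝ) * q^k * (1-q)^(s-k) with hw
  have hwnn : ∀ k, 0 ≤ w k := fun k => by positivity
  have hsum : ∑ k ∈ Finset.range (s+1), w k = 1 := by
    have h := add_pow q (1-q) s
    simp only [add_sub_cancel, one_pow] at h
    rw [h]
    exact Finset.sum_congr rfl (fun k _ => by rw [hw]; ring)
  have hone : ∑ k ∈ Finset.range (s+1), w k / (k+1) ≤ 1 / (q*(s+1)) := by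
    have key : ∀ k, (s+1 : ℝ) * (s.choose k : ℝ) = ((s+1).choose (k+1) : ℝ) * (k+1) := by
      intro k
      exact_mod_cast congrArg (Nat.cast : ℕ → ℝ) (Nat.add_one_mul_choose_eq s k)
    set g : ℕ → ℝ := fun j => ((s+1).choose j : ℝ) * q^j * (1-q)^(s+1-j) with hg
    have hgnn : ∀ j, 0 ≤ g j := fun j => by positivity
    have hgsum : ∑ j ∈ Finset.range (s+2), g j = 1 := by
      have h := add_pow q (1-q) (s+1)
      simp only [add_sub_cancel, one_pow] at h
      rw [show s+2 = (s+1)+1 from rfl, h]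
      exact Finset.sum_congr rfl (fun k _ => by rw [hg]; ring)
    have hterm : ∀ k ∈ Finset.range (s+1), w k / (k+1) = g (k+1) / (q * (s+1)) := by
      intro k hk
      have hks : k ≤ s := by simp at hk; omega
      simp only [hw, hg]
      have e1 : s + 1 - (k+1) = s - k := by omega
      rw [e1]
      rw [div_eq_div_iff (by positivity) (by positivity)]
      linear_combination (q^(k+1) * (1-q)^(s-k)) * key k
    rw [Finset.sum_congr rfl hterm, ← Finset.sum_div]
    have hnum : ∑ k ∈ Finset.range (s+1), g (k+1) ≤ 1 := by
      calc ∑ k ∈ Finset.range (s+1), g (k+1)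
          ≤ (∑ k ∈ Finset.range (s+1), g (k+1)) + g 0 := le_add_of_nonneg_right (hgnn 0)
        _ = ∑ j ∈ Finset.range (s+2), g j := (Finset.sum_range_succ' g (s+1)).symm
        _ = 1 := hgsum
    gcongr
  have hCS := Finset.sum_mul_sq_le_sq_mul_sq (Finset.range (s+1))
      (fun k => Real.sqrt (w k)) (fun k => Real.sqrt (w k) / Real.sqrt (k+1))
  have hL : ∀ k ∈ Finset.range (s+1),
      Real.sqrt (w k) * (Real.sqrt (w k) / Real.sqrt (k+1)) = w k * (1 / Real.sqrt (k+1)) := by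
    intro k _
    rw [mul_div_assoc', Real.mul_self_sqrt (hwnn k), mul_one_div]
  have hsq1 : ∀ k ∈ Finset.range (s+1), Real.sqrt (w k) ^ 2 = w k := fun k _ =>
    Real.sq_sqrt (hwnn k)
  have hsq2 : ∀ k ∈ Finset.range (s+1),
      (Real.sqrt (w k) / Real.sqrt (k+1)) ^ 2 = w k / (k+1) := by
    intro k _
    rw [div_pow, Real.sq_sqrt (hwnn k), Real.sq_sqrt (by positivity : (0:ℝ) ≤ (k:ℝ)+1)]
  rw [Finset.sum_congr rfl hL, Finset.sum_congr rfl hsq1, Finset.sum_congr rfl hsq2,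
      hsum, one_mul] at hCS
  have hmain : (∑ k ∈ Finset.range (s+1), w k * (1 / Real.sqrt (k+1)))^2
      ≤ 1 / (q*(s+1)) := le_trans hCS hone
  have hnn : 0 ≤ ∑ k ∈ Finset.range (s+1), w k * (1 / Real.sqrt (k+1)) :=
    Finset.sum_nonneg (fun k _ => by positivity)
  calc ∑ k ∈ Finset.range (s+1), (s.choose k : ℝ) * q^k * (1-q)^(s-k) * (1 / Real.sqrt (k+1))
      = ∑ k ∈ Finset.range (s+1), w k * (1 / Real.sqrt (k+1)) := rfl
    _ = Real.sqrt ((∑ k ∈ Finset.range (s+1), w k * (1 / Real.sqrt (k+1)))^2) :=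
        (Real.sqrt_sq hnn).symm
    _ ≤ Real.sqrt (1 / (q*(s+1))) := Real.sqrt_le_sqrt hmain
    _ = 1 / Real.sqrt (q*(s+1)) := by
        rw [one_div, Real.sqrt_inv, one_div]

/-- The master finitary bound: antichain measure under a product Bernoulli-type weight. -/
private lemma antichain_master (q : ℝ) (hq0 : 0 < q) (hq1 : q < 1) (s : ℕ)
    (p : Fin s → ℝ) (hp : ∀ i, q/2 ≤ p i ∧ p i ≤ 1 - q/2)
    (𝒜 : Finset (Finset (Fin s))) (hA : IsAntichain (· ⊆ ·) (𝒜 : Set (Finset (Fin s)))) :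
    ∑ S ∈ 𝒜, ∏ i, (if i ∈ S then p i else 1 - p i) ≤ 1 / Real.sqrt (q * (s+1)) := by
  classical
  set c : Fin s → ℝ := fun i => p i - q/2 with hc_def
  set c' : Fin s → ℝ := fun i => 1 - p i - q/2 with hc'_def
  have hc : ∀ i, 0 ≤ c i := fun i => by have := (hp i).1; simp [hc_def]; linarith
  have hc' : ∀ i, 0 ≤ c' i := fun i => by have := (hp i).2; simp [hc'_def]; linarith
  have hsum_cc : ∀ i, c i + c' i = 1 - q := fun i => by simp [hc_def, hc'_def]; ring
  have step1 : ∑ S ∈ 𝒜, ∏ i, (if i ∈ S then p i else 1 - p i)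
      = ∑ S ∈ 𝒜, ∏ i, ((if i ∈ S then c i else c' i) + q/2) := by
    apply Finset.sum_congr rfl
    intro S _
    apply Finset.prod_congr rfl
    intro i _
    split_ifs <;> simp [hc_def, hc'_def] <;> ring
  have step2 := antichain_weight (q/2) (by linarith) c c' hc hc' 𝒜 hA
  have step3 : ∑ T ∈ (univ : Finset (Fin s)).powerset,
        (q/2) ^ T.card * ((T.card.choose (T.card / 2)) * ∏ i ∈ Tᶜ, (c i + c' i))
      = ∑ k ∈ Finset.range (s+1),
        (s.choose k : ℝ) * ((q/2)^k * ((k.choose (k/2)) * (1-q)^(s-k))) := by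
    have he : ∀ T : Finset (Fin s),
        (q/2) ^ T.card * ((T.card.choose (T.card / 2)) * ∏ i ∈ Tᶜ, (c i + c' i))
        = (q/2)^T.card * ((T.card.choose (T.card / 2)) * (1-q)^(s - T.card)) := by
      intro T
      rw [Finset.prod_congr rfl (fun i _ => hsum_cc i), Finset.prod_const, Finset.card_compl,
        Fintype.card_fin]
    rw [Finset.sum_congr rfl (fun T _ => he T)]
    exact powerset_to_range (fun k => (q/2)^k * ((k.choose (k/2)) * (1-q)^(s-k)))
  have step4 : ∑ k ∈ Finset.range (s+1),
        (s.choose k : ℝ) * ((q/2)^k * ((k.choose (k/2)) * (1-q)^(s-k)))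
      ≤ ∑ k ∈ Finset.range (s+1),
        (s.choose k : ℝ) * q^k * (1-q)^(s-k) * (1 / Real.sqrt (k+1)) := by
    apply Finset.sum_le_sum
    intro k _
    have h1q : (0:ℝ) ≤ 1 - q := by linarith
    have hd := choose_half_div k
    calc (s.choose k : ℝ) * ((q/2)^k * ((k.choose (k/2)) * (1-q)^(s-k)))
        = ((s.choose k : ℝ) * q^k * (1-q)^(s-k)) * ((k.choose (k/2) : ℝ)/2^k) := by
          rw [div_pow]; ring
      _ ≤ ((s.choose k : ℝ) * q^k * (1-q)^(s-k)) * (1 / Real.sqrt (k+1)) := by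
          apply mul_le_mul_of_nonneg_left hd (by positivity)
  calc ∑ S ∈ 𝒜, ∏ i, (if i ∈ S then p i else 1 - p i)
      = ∑ S ∈ 𝒜, ∏ i, ((if i ∈ S then c i else c' i) + q/2) := step1
    _ ≤ ∑ T ∈ (univ : Finset (Fin s)).powerset,
          (q/2) ^ T.card * ((T.card.choose (T.card / 2)) * ∏ i ∈ Tᶜ, (c i + c' i)) := step2
    _ = ∑ k ∈ Finset.range (s+1),
          (s.choose k : ℝ) * ((q/2)^k * ((k.choose (k/2)) * (1-q)^(s-k))) := step3
    _ ≤ ∑ k ∈ Finset.range (s+1),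
          (s.choose k : ℝ) * q^k * (1-q)^(s-k) * (1 / Real.sqrt (k+1)) := step4
    _ ≤ 1 / Real.sqrt (q * (s+1)) := binom_sqrt_sum q hq0 hq1 s



private lemma signed_master (q : ℝ) (hq0 : 0 < q) (hq1 : q < 1) (s : ℕ)
    (α : Fin s → ℝ) (hα : ∀ i, α i ≠ 0) (b : ℝ)
    (p : Fin s → ℝ) (hp : ∀ i, q/2 ≤ p i ∧ p i ≤ 1 - q/2) :
    ∑ S ∈ univ.filter (fun S : Finset (Fin s) => ∑ i ∈ S, α i = b),
        ∏ i, (if i ∈ S then p i else 1 - p i) ≤ 1 / Real.sqrt (q * (s+1)) := by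
  classical
  set F : Finset (Fin s) := univ.filter (fun i => α i < 0) with hF
  have hmemF : ∀ i, i ∈ F ↔ α i < 0 := fun i => by simp [hF]
  set p' : Fin s → ℝ := fun i => if i ∈ F then 1 - p i else p i with hp'def
  have hp' : ∀ i, q/2 ≤ p' i ∧ p' i ≤ 1 - q/2 := by
    intro i
    have h1 := (hp i).1; have h2 := (hp i).2
    simp only [hp'def]
    split_ifs <;> constructor <;> linarith
  set b' : ℝ := b - ∑ i ∈ F, α i with hb'
  have habs : ∀ i, i ∉ F → |α i| = α i := fun i hi => abs_of_pos (by
    rcases lt_or_gt_of_ne (hα i) with h | h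
    · exact absurd ((hmemF i).mpr h) hi
    · exact h)
  have habs' : ∀ i, i ∈ F → |α i| = -α i := fun i hi => abs_of_neg ((hmemF i).mp hi)
  have hkey : ∀ S : Finset (Fin s), ∑ i ∈ symmDiff S F, |α i| = ∑ i ∈ S, α i - ∑ i ∈ F, α i := by
    intro S
    have hdisj : Disjoint (S \ F) (F \ S) := disjoint_sdiff_sdiff
    have hsd : symmDiff S F = (S \ F) ∪ (F \ S) := rfl
    rw [hsd, Finset.sum_union hdisj]
    have e1 : ∑ i ∈ S \ F, |α i| = ∑ i ∈ S \ F, α i :=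
      Finset.sum_congr rfl (fun i hi => habs i (Finset.mem_sdiff.mp hi).2)
    have e2 : ∑ i ∈ F \ S, |α i| = ∑ i ∈ F \ S, (-α i) :=
      Finset.sum_congr rfl (fun i hi => habs' i (Finset.mem_sdiff.mp hi).1)
    have e3 : ∑ i ∈ S ∩ F, α i + ∑ i ∈ S \ F, α i = ∑ i ∈ S, α i :=
      Finset.sum_inter_add_sum_sdiff S F α
    have e4 : ∑ i ∈ F ∩ S, α i + ∑ i ∈ F \ S, α i = ∑ i ∈ F, α i :=
      Finset.sum_inter_add_sum_sdiff F S α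
    have e5 : S ∩ F = F ∩ S := Finset.inter_comm S F
    rw [e1, e2, Finset.sum_neg_distrib]
    rw [e5] at e3
    linarith
  set 𝒜' : Finset (Finset (Fin s)) :=
    univ.filter (fun S => ∑ i ∈ S, |α i| = b') with h𝒜'
  have hanti : IsAntichain (· ⊆ ·) (𝒜' : Set (Finset (Fin s))) := by
    intro X hX Y hY hne hsub
    simp only [h𝒜', Finset.coe_filter, Set.mem_setOf_eq] at hX hY
    have hXY : X ⊆ Y := hsub
    have hssub : X ⊂ Y := Finset.ssubset_iff_subset_ne.mpr ⟨hXY, hne⟩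
    obtain ⟨j, hjY, hjX⟩ := Finset.exists_of_ssubset hssub
    have hsplit : ∑ i ∈ Y, |α i| = ∑ i ∈ X, |α i| + ∑ i ∈ Y \ X, |α i| := by
      rw [← Finset.sum_sdiff hXY]; ring
    have hpos : 0 < ∑ i ∈ Y \ X, |α i| := by
      apply Finset.sum_pos (fun i _ => abs_pos.mpr (hα i)) ⟨j, Finset.mem_sdiff.mpr ⟨hjY, hjX⟩⟩
    rw [hX.2, hY.2] at hsplit
    linarith
  have hbij : ∑ S ∈ univ.filter (fun S : Finset (Fin s) => ∑ i ∈ S, α i = b),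
      ∏ i, (if i ∈ S then p i else 1 - p i)
      = ∑ S ∈ 𝒜', ∏ i, (if i ∈ S then p' i else 1 - p' i) := by
    apply Finset.sum_nbij' (fun S => symmDiff S F) (fun S => symmDiff S F)
    · intro S hS
      simp only [Finset.mem_filter, Finset.mem_univ, true_and] at hS ⊢
      simp only [h𝒜', Finset.mem_filter, Finset.mem_univ, true_and]
      rw [hkey S, hS, hb']
    · intro S hS
      simp only [h𝒜', Finset.mem_filter, Finset.mem_univ, true_and] at hS
      simp only [Finset.mem_filter, Finset.mem_univ, true_and]
      have := hkey (symmDiff S F)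
      rw [symmDiff_symmDiff_cancel_right] at this
      rw [hS, hb'] at this
      linarith
    · intro S _; exact symmDiff_symmDiff_cancel_right F S
    · intro S _; exact symmDiff_symmDiff_cancel_right F S
    · intro S _
      apply Finset.prod_congr rfl
      intro i _
      by_cases hiF : i ∈ F <;> by_cases hiS : i ∈ S <;>
        simp [hp'def, Finset.mem_symmDiff, hiF, hiS]
  rw [hbij]
  exact antichain_master q hq0 hq1 s p' hp' 𝒜' hanti

open MeasureTheory ProbabilityTheory


/-- **Littlewood–Offord estimate for non-identically distributed Bernoulli variables.**
For `p₀ ∈ (1/2, 1)` there is `C > 0` such that for all `s ≥ 1`, all nonzero reals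
`α₁, …, α_s`, every real `b`, and independent Bernoulli random variables
`ε₁, …, ε_s` with parameters in `(1 - p₀, p₀)`, one has
`P(α₁ε₁ + ⋯ + α_sε_s = b) ≤ C / √s`. -/
theorem littlewood_offord (p₀ : ℝ) (hp₀ : p₀ ∈ Set.Ioo (1 / 2 : ℝ) 1) :
    ∃ C : ℝ, 0 < C ∧
      ∀ (s : ℕ), 1 ≤ s →
      ∀ (α : Fin s → ℝ), (∀ i, α i ≠ 0) →
      ∀ (b : ℝ),
      ∀ (Ω : Type) (_ : MeasureSpace Ω) (_ : IsProbabilityMeasure (ℙ : Measure Ω))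
        (ε : Fin s → Ω → ℝ) (p : Fin s → ℝ),
        (∀ i, Measurable (ε i)) →
        (∀ i, p i ∈ Set.Ioo (1 - p₀) p₀) →
        (∀ i, ℙ {ω | ε i ω = 1} = ENNReal.ofReal (p i) ∧
              ℙ {ω | ε i ω = 0} = ENNReal.ofReal (1 - p i)) →
        iIndepFun ε ℙ →
        (ℙ {ω | ∑ i, α i * ε i ω = b}).toReal ≤ C / Real.sqrt s := by
  obtain ⟨hp₀1, hp₀2⟩ := hp₀
  set q : ℝ := 2 * (1 - p₀) with hq
  have hq0 : 0 < q := by simp [hq]; linarith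
  have hq1 : q < 1 := by simp [hq]; linarith
  refine ⟨1 / Real.sqrt q, by positivity, ?_⟩
  intro s hs α hα b Ω mΩ hprob ε p hmeas hpio hber hind
  classical
  -- basic facts about p
  have hpq : ∀ i, q/2 ≤ p i ∧ p i ≤ 1 - q/2 := by
    intro i
    obtain ⟨h1, h2⟩ := hpio i
    constructor <;> simp [hq] <;> linarith
  have hp01 : ∀ i, 0 ≤ p i ∧ p i ≤ 1 := fun i => by
    obtain ⟨h1, h2⟩ := hpq i; constructor <;> linarith
  -- events
  have hpre1 : ∀ i, ε i ⁻¹' {(1:ℝ)} = {ω | ε i ω = 1} := fun i => rfl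
  have hpre0 : ∀ i, ε i ⁻¹' {(0:ℝ)} = {ω | ε i ω = 0} := fun i => rfl
  -- the null set
  set N : Set Ω := ⋃ i, (ε i ⁻¹' {(1:ℝ)} ∪ ε i ⁻¹' {(0:ℝ)})ᶜ with hN
  have hNnull : ℙ N = 0 := by
    apply measure_iUnion_null
    intro i
    have hdis : Disjoint (ε i ⁻¹' {(1:ℝ)}) (ε i ⁻¹' {(0:ℝ)}) := by
      apply Set.disjoint_left.mpr
      intro ω h1 h0
      simp only [Set.mem_preimage, Set.mem_singleton_iff] at h1 h0
      rw [h1] at h0; norm_num at h0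
    have hm1 : MeasurableSet (ε i ⁻¹' {(1:ℝ)}) := (hmeas i) (measurableSet_singleton _)
    have hm0 : MeasurableSet (ε i ⁻¹' {(0:ℝ)}) := (hmeas i) (measurableSet_singleton _)
    have hu : ℙ (ε i ⁻¹' {(1:ℝ)} ∪ ε i ⁻¹' {(0:ℝ)}) = 1 := by
      rw [measure_union hdis hm0, hpre1, hpre0, (hber i).1, (hber i).2,
        ← ENNReal.ofReal_add (hp01 i).1 (by have := (hp01 i).2; linarith)]
      norm_num
    rw [prob_compl_eq_one_sub (hm1.union hm0), hu]
    simp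
  -- covering
  set χ : Finset (Fin s) → Fin s → ℝ := fun S i => if i ∈ S then 1 else 0 with hχ
  set 𝒜 : Finset (Finset (Fin s)) :=
    univ.filter (fun S : Finset (Fin s) => ∑ i ∈ S, α i = b) with h𝒜
  set E : Finset (Fin s) → Set Ω := fun S => ⋂ i, ε i ⁻¹' {χ S i} with hE
  have hcover : {ω | ∑ i, α i * ε i ω = b} ⊆ (⋃ S ∈ 𝒜, E S) ∪ N := by
    intro ω hω
    simp only [Set.mem_setOf_eq] at hω
    by_cases hωN : ω ∈ N
    · exact Set.mem_union_right _ hωN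
    · left
      have hval : ∀ i, ε i ω = 1 ∨ ε i ω = 0 := by
        intro i
        simp only [hN, Set.mem_iUnion, Set.mem_compl_iff, Set.mem_union, Set.mem_preimage,
          Set.mem_singleton_iff, not_exists, not_not] at hωN
        have := hωN i
        tauto
      set S : Finset (Fin s) := univ.filter (fun i => ε i ω = 1) with hS
      have hεχ : ∀ i, ε i ω = χ S i := by
        intro i
        simp only [hχ, hS, Finset.mem_filter, Finset.mem_univ, true_and]
        rcases hval i with h | h <;> simp [h]
      have hSmem : S ∈ 𝒜 := by
        simp only [h𝒜, Finset.mem_filter, Finset.mem_univ, true_and]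
        calc ∑ i ∈ S, α i = ∑ i, α i * χ S i := by
              simp only [hχ, mul_ite, mul_one, mul_zero]
              rw [Finset.sum_ite_mem, Finset.univ_inter]
          _ = ∑ i, α i * ε i ω := by
              exact Finset.sum_congr rfl (fun i _ => by rw [hεχ i])
          _ = b := hω
      refine Set.mem_biUnion hSmem ?_
      simp only [hE, Set.mem_iInter, Set.mem_preimage, Set.mem_singleton_iff]
      exact fun i => hεχ i
  -- product formula
  have hprod : ∀ S : Finset (Fin s),
      ℙ (E S) = ENNReal.ofReal (∏ i, (if i ∈ S then p i else 1 - p i)) := by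
    intro S
    have h1 := hind.measure_inter_preimage_eq_mul (sets := fun i => {χ S i}) univ
      (fun i _ => measurableSet_singleton _)
    have h2 : (⋂ i ∈ (univ : Finset (Fin s)), ε i ⁻¹' {χ S i}) = E S := by
      simp [hE]
    rw [h2] at h1
    rw [h1]
    have h3 : ∀ i : Fin s, ℙ (ε i ⁻¹' {χ S i})
        = ENNReal.ofReal (if i ∈ S then p i else 1 - p i) := by
      intro i
      simp only [hχ]
      split_ifs with h
      · rw [hpre1, (hber i).1]
      · rw [hpre0, (hber i).2]
    calc ∏ i, ℙ (ε i ⁻¹' (fun i => {χ S i}) i)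
        = ∏ i, ENNReal.ofReal (if i ∈ S then p i else 1 - p i) :=
          Finset.prod_congr rfl (fun i _ => h3 i)
      _ = ENNReal.ofReal (∏ i, (if i ∈ S then p i else 1 - p i)) := by
          rw [ENNReal.ofReal_prod_of_nonneg]
          intro i _
          split_ifs with h
          · exact (hp01 i).1
          · have := (hp01 i).2; linarith
  -- combine
  have hbound : ℙ {ω | ∑ i, α i * ε i ω = b}
      ≤ ENNReal.ofReal (∑ S ∈ 𝒜, ∏ i, (if i ∈ S then p i else 1 - p i)) := by
    calc ℙ {ω | ∑ i, α i * ε i ω = b}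
        ≤ ℙ ((⋃ S ∈ 𝒜, E S) ∪ N) := measure_mono hcover
      _ ≤ ℙ (⋃ S ∈ 𝒜, E S) + ℙ N := measure_union_le _ _
      _ = ℙ (⋃ S ∈ 𝒜, E S) := by rw [hNnull, add_zero]
      _ ≤ ∑ S ∈ 𝒜, ℙ (E S) := measure_biUnion_finset_le 𝒜 E
      _ = ∑ S ∈ 𝒜, ENNReal.ofReal (∏ i, (if i ∈ S then p i else 1 - p i)) :=
          Finset.sum_congr rfl (fun S _ => hprod S)
      _ = ENNReal.ofReal (∑ S ∈ 𝒜, ∏ i, (if i ∈ S then p i else 1 - p i)) := by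
          rw [ENNReal.ofReal_sum_of_nonneg]
          intro S _
          apply Finset.prod_nonneg
          intro i _
          split_ifs with h
          · exact (hp01 i).1
          · have := (hp01 i).2; linarith
  have hXnn : 0 ≤ ∑ S ∈ 𝒜, ∏ i, (if i ∈ S then p i else 1 - p i) := by
    apply Finset.sum_nonneg
    intro S _
    apply Finset.prod_nonneg
    intro i _
    split_ifs with h
    · exact (hp01 i).1
    · have := (hp01 i).2; linarith
  have htoReal : (ℙ {ω | ∑ i, α i * ε i ω = b}).toReal
      ≤ ∑ S ∈ 𝒜, ∏ i, (if i ∈ S then p i else 1 - p i) := by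
    have := ENNReal.toReal_mono ENNReal.ofReal_ne_top hbound
    rwa [ENNReal.toReal_ofReal hXnn] at this
  have hmaster := signed_master q hq0 hq1 s α hα b p hpq
  have hfinal : (1:ℝ) / Real.sqrt (q * (s+1)) ≤ (1 / Real.sqrt q) / Real.sqrt s := by
    rw [div_div, ← Real.sqrt_mul (le_of_lt hq0)]
    apply one_div_le_one_div_of_le
    · apply Real.sqrt_pos.mpr
      have hs1 : (1:ℝ) ≤ (s:ℝ) := by exact_mod_cast hs
      positivity
    · apply Real.sqrt_le_sqrt
      have hs0 : (0:ℝ) ≤ (s:ℝ) := by positivity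
      nlinarith
  calc (ℙ {ω | ∑ i, α i * ε i ω = b}).toReal
      ≤ ∑ S ∈ 𝒜, ∏ i, (if i ∈ S then p i else 1 - p i) := htoReal
    _ ≤ 1 / Real.sqrt (q * (s+1)) := hmaster
    _ ≤ (1 / Real.sqrt q) / Real.sqrt s := hfinal
end

section
/- Let p_0 ∈ (1/2, 1) and let A = (a_{ij}) be an m × n random matrix whose entries have the form a_{ij} = c_{ij} + d_{ij} ε_{ij}, where the c_{ij} are fixed real numbers, the d_{ij} are fixed nonzero real numbers, and the ε_{ij} are mutually independent Bernoulli random variables with parameters p_{ij} ∈ (1 - p_0, p_0). Then for every k with 1 ≤ k ≤ min(m, n), the probability that the strong column rank of A is smaller than k (i.e., that there exist k columns of A which are linearly dependent) is at most binom(n, k) · p_0^{m-k+1} / (1 - p_0). -/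
set_option maxHeartbeats 1000000

open MeasureTheory ProbabilityTheory
open Module Submodule
open scoped ENNReal

lemma exists_determining_coords {R : Type*} [Fintype R] (V : Submodule ℝ (R → ℝ)) :
    ∃ s : Finset R, s.card ≤ finrank ℝ V ∧ ∀ x ∈ V, (∀ i ∈ s, x i = 0) → x = 0 := by
  classical
  haveI : FiniteDimensional ℝ ↥V := inferInstance
  set φ : R → Module.Dual ℝ V := fun i => (LinearMap.proj i).comp V.subtype with hφ
  have hsep : ∀ v : V, (∀ i, φ i v = 0) → v = 0 := by
    intro v hv; ext i; exact hv i
  set W : Submodule ℝ (Module.Dual ℝ V) := span ℝ (Set.range φ) with hW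
  haveI : FiniteDimensional ℝ (Module.Dual ℝ V) := inferInstance
  haveI : FiniteDimensional ℝ ↥W := inferInstance
  have hdual : ∀ (X : Type _) [AddCommGroup X] [Module ℝ X] [FiniteDimensional ℝ X],
      finrank ℝ (Module.Dual ℝ X) = finrank ℝ X := by
    intro X _ _ _
    exact LinearEquiv.finrank_eq (Basis.ofVectorSpace ℝ X).toDualEquiv.symm
  have hWtop : W = ⊤ := by
    haveI : Module.Finite ℝ (Module.Dual ℝ ↥W) :=
      Subspace.instModuleDualFiniteDimensional (K := ℝ) (V := ↥W)
    set ev : V →ₗ[ℝ] Module.Dual ℝ W := (W.subtype.dualMap).comp (Module.Dual.eval ℝ V) with hev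
    have hinj : Function.Injective ev := by
      rw [← LinearMap.ker_eq_bot, eq_bot_iff]
      intro v hv
      simp only [LinearMap.mem_ker] at hv
      refine hsep v fun i => ?_
      have hmem : φ i ∈ W := subset_span (Set.mem_range_self i)
      have : (ev v) ⟨φ i, hmem⟩ = 0 := by rw [hv]; rfl
      exact this
    have h1 : finrank ℝ V ≤ finrank ℝ (Module.Dual ℝ ↥W) :=
      LinearMap.finrank_le_finrank_of_injective hinj
    have h1' : finrank ℝ V ≤ finrank ℝ ↥W := h1.trans_eq (hdual ↥W)
    apply Submodule.eq_top_of_finrank_eq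
    have h2 : finrank ℝ W ≤ finrank ℝ (Module.Dual ℝ V) := W.finrank_le
    have h2' : finrank ℝ (Module.Dual ℝ V) = finrank ℝ V := hdual ↥V
    omega
  obtain ⟨b, hbsub, hbspan, hbind⟩ := exists_linearIndependent ℝ (Set.range φ)
  have hbfin : b.Finite := hbind.finite
  obtain ⟨t, ht⟩ : ∃ t : Finset (Module.Dual ℝ V), ↑t = b := ⟨hbfin.toFinset, hbfin.coe_toFinset⟩
  have hmemt : ∀ ψ, ψ ∈ t ↔ ψ ∈ b := by intro ψ; rw [← ht]; rfl
  have hbtop : span ℝ b = ⊤ := by rw [hbspan, ← hW, hWtop]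
  have hchoice : ∀ ψ ∈ b, ∃ i : R, φ i = ψ := fun ψ hψ => hbsub hψ
  choose idx hidx using hchoice
  refine ⟨t.attach.image (fun ψ => idx ψ.1 ((hmemt ψ.1).1 ψ.2)), ?_, ?_⟩
  · calc (t.attach.image (fun ψ => idx ψ.1 ((hmemt ψ.1).1 ψ.2))).card
        ≤ t.attach.card := Finset.card_image_le
      _ = t.card := Finset.card_attach
      _ ≤ finrank ℝ (Module.Dual ℝ V) := by
          apply LinearIndependent.finset_card_le_finrank
          refine hbind.comp (fun (x : {y : Module.Dual ℝ V // y ∈ t}) => (⟨x.1, (hmemt x.1).1 x.2⟩ : b)) ?_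
          intro x y hxy
          have h' := congrArg Subtype.val hxy
          exact Subtype.ext h'
      _ = finrank ℝ V := hdual ↥V
  · intro x hx hzero
    have hxv : ∀ ψ : Module.Dual ℝ V, ∀ hψ : ψ ∈ b, ψ ⟨x, hx⟩ = (0 : ℝ) := by
      intro ψ hψ
      have hmem : idx ψ hψ ∈ t.attach.image (fun ψ => idx ψ.1 ((hmemt ψ.1).1 ψ.2)) := by
        refine Finset.mem_image.2 ⟨⟨ψ, (hmemt ψ).2 hψ⟩, Finset.mem_attach _ _, ?_⟩
        simp
      have h0 : x (idx ψ hψ) = 0 := hzero _ hmem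
      have : φ (idx ψ hψ) ⟨x, hx⟩ = x (idx ψ hψ) := rfl
      rw [← hidx ψ hψ, this, h0]
    have hall : ∀ ψ : Module.Dual ℝ V, ψ ⟨x, hx⟩ = 0 := by
      intro ψ
      have hψW : ψ ∈ span ℝ b := by rw [hbtop]; trivial
      have hle : span ℝ b ≤ LinearMap.ker (Module.Dual.eval ℝ V ⟨x, hx⟩) := by
        rw [span_le]
        intro g hg
        simp only [SetLike.mem_coe, LinearMap.mem_ker]
        exact hxv g hg
      simpa using hle hψW
    have : (⟨x, hx⟩ : V) = 0 := hsep _ fun i => hall (φ i)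
    simpa using congrArg Subtype.val this

lemma pi_measure_submodule_le {R : Type*} [Fintype R] (μ : R → Measure ℝ)
    [∀ i, IsProbabilityMeasure (μ i)] (q : ℝ≥0∞) (hq1 : q ≤ 1)
    (hatom : ∀ i a, μ i {a} ≤ q) (V : Submodule ℝ (R → ℝ)) (t : ℕ)
    (hV : finrank ℝ V ≤ t) :
    Measure.pi μ (V : Set (R → ℝ)) ≤ q ^ (Fintype.card R - t) := by
  classical
  obtain ⟨s, hscard, hsdet⟩ := exists_determining_coords V
  have hscard' : s.card ≤ t := hscard.trans hV
  set p : R → Prop := fun i => i ∈ s with hp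
  -- the restriction-to-s map on V is injective
  set Φ : V →ₗ[ℝ] ({i // p i} → ℝ) := LinearMap.pi (fun i => (LinearMap.proj i.1).comp V.subtype)
    with hΦ
  have hΦinj : LinearMap.ker Φ = ⊥ := by
    rw [eq_bot_iff]
    intro v hv
    simp only [LinearMap.mem_ker] at hv
    have : ∀ i ∈ s, (v : R → ℝ) i = 0 := by
      intro i hi
      have := congrFun hv ⟨i, hi⟩
      exact this
    have := hsdet v.1 v.2 this
    exact (Submodule.mem_bot ℝ).2 (Subtype.ext this)
  obtain ⟨G, hG⟩ := Φ.exists_leftInverse_of_injective hΦinj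
  -- the linear map reconstructing the remaining coordinates
  set F : ({i // p i} → ℝ) →ₗ[ℝ] ({i // ¬ p i} → ℝ) :=
    (LinearMap.pi (fun i => (LinearMap.proj i.1).comp V.subtype)).comp G with hF
  have hFx : ∀ x ∈ V, ∀ i : {i // ¬ p i}, x i.1 = F (fun j => x j.1) i := by
    intro x hx i
    have h1 : G (Φ ⟨x, hx⟩) = ⟨x, hx⟩ := by
      have := congrFun (congrArg DFunLike.coe hG) ⟨x, hx⟩
      simpa using this
    have h2 : Φ ⟨x, hx⟩ = fun j : {i // p i} => x j.1 := rfl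
    simp only [hF, LinearMap.comp_apply, ← h2, h1]
    rfl
  -- measure-theoretic part
  have hmp := measurePreserving_piEquivPiSubtypeProd (α := fun _ : R => ℝ) μ p
  set e := MeasurableEquiv.piEquivPiSubtypeProd (fun _ : R => ℝ) p with he
  have hFcont : Continuous F := F.continuous_of_finiteDimensional
  set T : Set (({i // p i} → ℝ) × ({i // ¬ p i} → ℝ)) := {z | z.2 = F z.1} with hT
  have hTmeas : MeasurableSet T :=
    measurableSet_eq_fun measurable_snd ((hFcont.comp continuous_fst).measurable)
  have hsub : (V : Set (R → ℝ)) ⊆ e ⁻¹' T := by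
    intro x hx
    simp only [Set.mem_preimage, he, hT, Set.mem_setOf_eq,
      MeasurableEquiv.piEquivPiSubtypeProd_apply]
    funext i
    exact hFx x hx i
  have hcard : Fintype.card {i // ¬ p i} = Fintype.card R - Fintype.card {i // p i} :=
    Fintype.card_subtype_compl p
  have hcardp : Fintype.card {i // p i} = s.card := by
    simp [hp, Fintype.card_subtype]
  have hfiber : ∀ u : {i // p i} → ℝ,
      (Measure.pi fun i : {i // ¬ p i} => μ i.1) (Prod.mk u ⁻¹' T) ≤ q ^ (Fintype.card R - t) := by
    intro u
    have hpre : Prod.mk u ⁻¹' T = {F u} := by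
      ext w; simp [hT]
    rw [hpre]
    have hsing : ({F u} : Set ({i // ¬ p i} → ℝ)) = Set.pi Set.univ (fun i => {F u i}) := by
      ext w; simp [funext_iff]
    rw [hsing, Measure.pi_pi]
    calc ∏ i : {i // ¬ p i}, μ i.1 {F u i} ≤ ∏ _i : {i // ¬ p i}, q :=
          Finset.prod_le_prod' (fun i _ => hatom i.1 (F u i))
      _ = q ^ (Fintype.card {i // ¬ p i}) := by rw [Finset.prod_const, Finset.card_univ]
      _ ≤ q ^ (Fintype.card R - t) := by
          apply pow_le_pow_of_le_one (by simp) hq1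
          omega
  calc Measure.pi μ (V : Set (R → ℝ)) ≤ Measure.pi μ (e ⁻¹' T) := measure_mono hsub
    _ = _ := hmp.measure_preimage hTmeas.nullMeasurableSet
    _ ≤ q ^ (Fintype.card R - t) := by
        rw [Measure.prod_apply hTmeas]
        apply le_trans (lintegral_mono fun u => hfiber u)
        rw [lintegral_const, measure_univ, mul_one]

lemma exists_dep_prefix {W : Type*} [AddCommGroup W] [Module ℝ W] {k : ℕ} (v : Fin k → W)
    (h : ¬ LinearIndependent ℝ v) :
    ∃ t : Fin k, ¬ LinearIndependent ℝ (fun s : Fin (t.1+1) => v (Fin.castLE t.2 s)) ∧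
      LinearIndependent ℝ (fun s : Fin t.1 => v (Fin.castLE t.2.le s)) := by
  classical
  set P : ℕ → Prop := fun j => ∃ hj : j ≤ k, ¬ LinearIndependent ℝ (fun s : Fin j => v (Fin.castLE hj s)) with hP
  have hex : ∃ j, P j := by
    refine ⟨k, le_rfl, ?_⟩
    have hvv : (fun s : Fin k => v (Fin.castLE le_rfl s)) = v :=
      funext fun s => congrArg v (Fin.ext rfl)
    rw [hvv]
    exact h
  set j := Nat.find hex with hj
  obtain ⟨hjk, hdep⟩ := Nat.find_spec hex
  have hj1 : 1 ≤ j := by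
    by_contra hc
    push_neg at hc
    haveI : IsEmpty (Fin j) := ⟨fun x => by have := x.2; omega⟩
    exact hdep linearIndependent_empty_type
  have hjlt : j - 1 < k := by omega
  refine ⟨⟨j - 1, hjlt⟩, ?_, ?_⟩
  · have hj' : j - 1 + 1 = j := by omega
    intro hind
    apply hdep
    have hcomp : (fun s : Fin j => v (Fin.castLE hjk s))
        = (fun s : Fin (j-1+1) => v (Fin.castLE hjlt s)) ∘ (finCongr hj'.symm) := by
      funext s
      exact congrArg v (Fin.ext rfl)
    rw [hcomp]
    exact hind.comp _ (finCongr hj'.symm).injective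
  · by_contra hc
    have : P (j - 1) := ⟨by omega, hc⟩
    exact Nat.find_min hex (by omega) this

lemma map_joint_eq_pi {ι : Type*} [Fintype ι] {Ω : Type*} [MeasureSpace Ω]
    [IsProbabilityMeasure (ℙ : Measure Ω)] (X : ι → Ω → ℝ) (hX : ∀ i, Measurable (X i))
    (hind : iIndepFun (β := fun _ : ι => ℝ) X ℙ) :
    Measure.map (fun ω i => X i ω) ℙ = Measure.pi (fun i => Measure.map (X i) ℙ) := by
  haveI : ∀ i, IsProbabilityMeasure (Measure.map (X i) ℙ) :=
    fun i => Measure.isProbabilityMeasure_map (hX i).aemeasurable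
  symm
  apply Measure.pi_eq
  intro s hs
  rw [Measure.map_apply (measurable_pi_lambda _ hX) (MeasurableSet.univ_pi hs)]
  have hpre : (fun ω i => X i ω) ⁻¹' (Set.pi Set.univ s) = ⋂ i ∈ Finset.univ, X i ⁻¹' s i := by
    ext ω
    simp [Set.mem_pi]
  rw [hpre, hind.measure_inter_preimage_eq_mul Finset.univ (fun i _ => hs i)]
  refine Finset.prod_congr rfl fun i _ => ?_
  rw [Measure.map_apply (hX i) (hs i)]

lemma dep_step_bound {m n : ℕ} (μ : Fin m × Fin n → Measure ℝ)
    [∀ z, IsProbabilityMeasure (μ z)] (q : ℝ≥0∞) (hq1 : q ≤ 1)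
    (hatom : ∀ z a, μ z {a} ≤ q) {k : ℕ} (e : Fin k → Fin n) (he : Function.Injective e)
    (t : Fin k) :
    Measure.pi μ {M : Fin m × Fin n → ℝ |
        ¬ LinearIndependent ℝ (fun s : Fin (t.1+1) => fun i : Fin m => M (i, e (Fin.castLE t.2 s)))
        ∧ LinearIndependent ℝ (fun s : Fin t.1 => fun i : Fin m => M (i, e (Fin.castLE t.2.le s)))}
      ≤ q ^ (m - t.1) := by
  classical
  set p : Fin m × Fin n → Prop := fun z => z.2 ≠ e t with hp
  set G : Set (Fin m × Fin n → ℝ) := {M : Fin m × Fin n → ℝ |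
        ¬ LinearIndependent ℝ (fun s : Fin (t.1+1) => fun i : Fin m => M (i, e (Fin.castLE t.2 s)))
        ∧ LinearIndependent ℝ (fun s : Fin t.1 => fun i : Fin m => M (i, e (Fin.castLE t.2.le s)))}
    with hG
  -- measurability of G
  have hGmeas : MeasurableSet G := by
    have hc1 : Continuous (fun M : Fin m × Fin n → ℝ =>
        (fun s : Fin (t.1+1) => fun i : Fin m => M (i, e (Fin.castLE t.2 s)))) :=
      continuous_pi fun s => continuous_pi fun i => continuous_apply _
    have hc2 : Continuous (fun M : Fin m × Fin n → ℝ =>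
        (fun s : Fin t.1 => fun i : Fin m => M (i, e (Fin.castLE t.2.le s)))) :=
      continuous_pi fun s => continuous_pi fun i => continuous_apply _
    have h1 : MeasurableSet {M : Fin m × Fin n → ℝ |
        LinearIndependent ℝ (fun s : Fin (t.1+1) => fun i : Fin m => M (i, e (Fin.castLE t.2 s)))} :=
      (isOpen_setOf_linearIndependent.preimage hc1).measurableSet
    have h2 : MeasurableSet {M : Fin m × Fin n → ℝ |
        LinearIndependent ℝ (fun s : Fin t.1 => fun i : Fin m => M (i, e (Fin.castLE t.2.le s)))} :=
      (isOpen_setOf_linearIndependent.preimage hc2).measurableSet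
    exact h1.compl.inter h2
  -- split into the column (e t) and the rest
  have hmp := measurePreserving_piEquivPiSubtypeProd (α := fun _ : Fin m × Fin n => ℝ) μ p
  set E := MeasurableEquiv.piEquivPiSubtypeProd (fun _ : Fin m × Fin n => ℝ) p with hE
  set T : Set (({z // p z} → ℝ) × ({z // ¬ p z} → ℝ)) := ⇑E.symm ⁻¹' G with hT
  have hTmeas : MeasurableSet T := E.symm.measurable hGmeas
  have hGT : G = ⇑E ⁻¹' T := by
    ext M
    simp [hT]
  -- the reconstruction linear map for the t-th column
  have hmem : ∀ i : Fin m, ¬ p (i, e t) := by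
    intro i
    simp [hp]
  set wvL : ({z // ¬ p z} → ℝ) →ₗ[ℝ] (Fin m → ℝ) :=
    LinearMap.pi (fun i : Fin m => LinearMap.proj (⟨(i, e t), hmem i⟩ : {z // ¬ p z})) with hwvL
  set invL : (Fin m → ℝ) →ₗ[ℝ] ({z // ¬ p z} → ℝ) :=
    LinearMap.pi (fun z : {z // ¬ p z} => LinearMap.proj z.1.1) with hinvL
  have hzeq : ∀ z : {z // ¬ p z}, (⟨(z.1.1, e t), hmem z.1.1⟩ : {z // ¬ p z}) = z := by
    intro z
    have hz2 : z.1.2 = e t := not_not.1 z.2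
    exact Subtype.ext (Prod.ext rfl hz2.symm)
  set Lw : ({z // ¬ p z} → ℝ) ≃ₗ[ℝ] (Fin m → ℝ) :=
    LinearEquiv.ofLinear wvL invL
      (by ext g i; simp [hwvL, hinvL])
      (by
        ext w z
        simp only [LinearMap.comp_apply, LinearMap.id_apply, hwvL, hinvL, LinearMap.pi_apply,
          LinearMap.proj_apply]
        rw [hzeq z]) with hLw
  -- cardinality of the column index set
  have hcard : Fintype.card {z : Fin m × Fin n // ¬ p z} = m :=
    (Fintype.card_congr (⟨fun z => z.1.1, fun i => ⟨(i, e t), hmem i⟩,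
      fun z => hzeq z, fun i => rfl⟩ : {z : Fin m × Fin n // ¬ p z} ≃ Fin m)).trans
      (Fintype.card_fin m)
  have hpz : ∀ (s : Fin t.1) (i : Fin m), p (i, e (Fin.castLE t.2.le s)) := by
    intro s i
    simp only [hp, ne_eq]
    intro hc
    have h2 : (Fin.castLE t.2.le s : Fin k) = t := he hc
    have h3 : (s : ℕ) = (t : ℕ) := congrArg Fin.val h2
    have hlt := s.2
    omega
  -- fiber bound
  have hfiber : ∀ u : {z // p z} → ℝ,
      (Measure.pi fun z : {z // ¬ p z} => μ z.1) (Prod.mk u ⁻¹' T) ≤ q ^ (m - t.1) := by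
    intro u
    set cu : Fin t.1 → Fin m → ℝ :=
      fun s i => u ⟨(i, e (Fin.castLE t.2.le s)), hpz s i⟩ with hcu
    set V₀ : Submodule ℝ (Fin m → ℝ) := span ℝ (Set.range cu) with hV₀
    have hsubfib : Prod.mk u ⁻¹' T ⊆ (Submodule.comap wvL V₀ : Set ({z // ¬ p z} → ℝ)) := by
      intro w hw
      simp only [hT, Set.mem_preimage, hG, Set.mem_setOf_eq] at hw
      obtain ⟨hdep, hind⟩ := hw
      -- identify the families
      have hfam0 : (fun s : Fin t.1 => fun i : Fin m =>
          (E.symm (u, w)) (i, e (Fin.castLE t.2.le s))) = cu := by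
        funext s i
        simp only [hE, MeasurableEquiv.piEquivPiSubtypeProd_symm_apply, hcu]
        rw [dif_pos (hpz s i)]
      have hfam1 : (fun s : Fin (t.1+1) => fun i : Fin m =>
          (E.symm (u, w)) (i, e (Fin.castLE t.2 s))) = Fin.snoc cu (wvL w) := by
        funext s
        refine Fin.lastCases ?_ ?_ s
        · funext i
          have h1 : Fin.castLE t.2 (Fin.last t.1) = t := Fin.ext rfl
          simp only [h1, Fin.snoc_last]
          simp only [hE, MeasurableEquiv.piEquivPiSubtypeProd_symm_apply]
          rw [dif_neg (hmem i)]
          rfl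
        · intro s'
          funext i
          have h1 : Fin.castLE t.2 (Fin.castSucc s') = Fin.castLE t.2.le s' := Fin.ext rfl
          simp only [h1, Fin.snoc_castSucc]
          rw [← hfam0]
      rw [hfam0] at hind
      rw [hfam1] at hdep
      rw [linearIndependent_fin_snoc] at hdep
      push_neg at hdep
      have hwv : wvL w ∈ V₀ := hdep hind
      simpa using hwv
    refine (measure_mono hsubfib).trans ?_
    have hVrank : finrank ℝ (Submodule.comap (wvL : ({z // ¬ p z} → ℝ) →ₗ[ℝ] (Fin m → ℝ)) V₀) ≤ t.1 := by
      have hcomap : Submodule.comap (wvL : ({z // ¬ p z} → ℝ) →ₗ[ℝ] (Fin m → ℝ)) V₀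
          = Submodule.map (Lw.symm : (Fin m → ℝ) →ₗ[ℝ] ({z // ¬ p z} → ℝ)) V₀ := by
        have : wvL = (Lw : ({z // ¬ p z} → ℝ) →ₗ[ℝ] (Fin m → ℝ)) := rfl
        rw [this, Submodule.comap_equiv_eq_map_symm]
      rw [hcomap]
      rw [LinearEquiv.finrank_map_eq]
      have h1 : finrank ℝ V₀ ≤ Fintype.card (Fin t.1) := finrank_range_le_card cu
      simpa using h1
    have := pi_measure_submodule_le (fun z : {z // ¬ p z} => μ z.1) q hq1
      (fun z a => hatom z.1 a) (Submodule.comap wvL V₀) t.1 hVrank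
    rw [hcard] at this
    exact this
  -- put everything together
  calc Measure.pi μ G = Measure.pi μ (⇑E ⁻¹' T) := by rw [← hGT]
    _ = _ := hmp.measure_preimage hTmeas.nullMeasurableSet
    _ ≤ q ^ (m - t.1) := by
        rw [Measure.prod_apply hTmeas]
        apply le_trans (lintegral_mono fun u => hfiber u)
        rw [lintegral_const, measure_univ, mul_one]

lemma dep_set_bound {m n : ℕ} (μ : Fin m × Fin n → Measure ℝ)
    [∀ z, IsProbabilityMeasure (μ z)] (q : ℝ≥0∞) (hq1 : q ≤ 1)
    (hatom : ∀ z a, μ z {a} ≤ q) {k : ℕ} (S : Finset (Fin n)) (hS : S.card = k) :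
    Measure.pi μ {M : Fin m × Fin n → ℝ |
        ¬ LinearIndependent ℝ (fun j : S => fun i : Fin m => M (i, (j : Fin n)))}
      ≤ ∑ t ∈ Finset.range k, q ^ (m - t) := by
  classical
  set e : Fin k → Fin n := fun t => ((S.orderIsoOfFin hS t : {x // x ∈ S}) : Fin n) with he'
  have he : Function.Injective e := by
    intro a b hab
    exact (S.orderIsoOfFin hS).injective (Subtype.ext hab)
  have hsub : {M : Fin m × Fin n → ℝ |
        ¬ LinearIndependent ℝ (fun j : S => fun i : Fin m => M (i, (j : Fin n)))}
      ⊆ ⋃ t : Fin k, {M : Fin m × Fin n → ℝ |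
        ¬ LinearIndependent ℝ (fun s : Fin (t.1+1) => fun i : Fin m => M (i, e (Fin.castLE t.2 s)))
        ∧ LinearIndependent ℝ (fun s : Fin t.1 => fun i : Fin m => M (i, e (Fin.castLE t.2.le s)))} := by
    intro M hM
    simp only [Set.mem_setOf_eq] at hM
    have hMv : ¬ LinearIndependent ℝ (fun t : Fin k => fun i : Fin m => M (i, e t)) := by
      intro hind
      apply hM
      have hfam : (fun j : S => fun i : Fin m => M (i, (j : Fin n)))
          = (fun t : Fin k => fun i : Fin m => M (i, e t)) ∘ (S.orderIsoOfFin hS).symm := by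
        funext j
        simp only [Function.comp_apply, he']
        rw [OrderIso.apply_symm_apply]
      rw [hfam]
      exact hind.comp _ (S.orderIsoOfFin hS).symm.injective
    obtain ⟨t, h1, h2⟩ := exists_dep_prefix _ hMv
    exact Set.mem_iUnion.2 ⟨t, h1, h2⟩
  calc Measure.pi μ _ ≤ Measure.pi μ (⋃ t : Fin k, {M : Fin m × Fin n → ℝ |
        ¬ LinearIndependent ℝ (fun s : Fin (t.1+1) => fun i : Fin m => M (i, e (Fin.castLE t.2 s)))
        ∧ LinearIndependent ℝ (fun s : Fin t.1 => fun i : Fin m => M (i, e (Fin.castLE t.2.le s)))}) :=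
      measure_mono hsub
    _ ≤ ∑ t : Fin k, Measure.pi μ {M : Fin m × Fin n → ℝ |
        ¬ LinearIndependent ℝ (fun s : Fin (t.1+1) => fun i : Fin m => M (i, e (Fin.castLE t.2 s)))
        ∧ LinearIndependent ℝ (fun s : Fin t.1 => fun i : Fin m => M (i, e (Fin.castLE t.2.le s)))} := by
      exact measure_iUnion_fintype_le _ _
    _ ≤ ∑ t : Fin k, q ^ (m - t.1) :=
      Finset.sum_le_sum fun t _ => dep_step_bound μ q hq1 hatom e he t
    _ = ∑ t ∈ Finset.range k, q ^ (m - t) := Fin.sum_univ_eq_sum_range (fun t => q ^ (m - t)) k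

lemma geom_bound (p₀ : ℝ) (h0 : 0 < p₀) (h1 : p₀ < 1) (m k : ℕ) (hk1 : 1 ≤ k) (hkm : k ≤ m) :
    ∑ t ∈ Finset.range k, p₀ ^ (m - t) ≤ p₀ ^ (m - k + 1) / (1 - p₀) := by
  have h1p : 0 < 1 - p₀ := by linarith
  have hsplit : ∀ t ∈ Finset.range k, p₀ ^ (m - t) = p₀ ^ (m - k + 1) * p₀ ^ (k - 1 - t) := by
    intro t ht
    rw [Finset.mem_range] at ht
    rw [← pow_add]
    congr 1
    omega
  rw [Finset.sum_congr rfl hsplit, ← Finset.mul_sum]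
  have hreflect : ∑ t ∈ Finset.range k, p₀ ^ (k - 1 - t) = ∑ t ∈ Finset.range k, p₀ ^ t :=
    Finset.sum_range_reflect (fun i => p₀ ^ i) k
  rw [hreflect]
  have hgeom : (∑ t ∈ Finset.range k, p₀ ^ t) ≤ 1 / (1 - p₀) := by
    rw [le_div_iff₀ h1p]
    have := geom_sum_mul p₀ k
    have hpk : 0 ≤ p₀ ^ k := pow_nonneg h0.le k
    nlinarith [this]
  calc p₀ ^ (m - k + 1) * ∑ t ∈ Finset.range k, p₀ ^ t
      ≤ p₀ ^ (m - k + 1) * (1 / (1 - p₀)) :=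
        mul_le_mul_of_nonneg_left hgeom (pow_nonneg h0.le _)
    _ = p₀ ^ (m - k + 1) / (1 - p₀) := by ring

/-- **Strong column rank bound.**
Let `A` be an `m × n` random matrix with entries `a i j = c i j + d i j * ε i j` where
the `c i j` are fixed reals, the `d i j` are fixed nonzero reals, and the `ε i j` are
independent Bernoulli random variables with parameters in `(1 - p₀, p₀)`, `p₀ ∈ (1/2, 1)`.
Then for any `1 ≤ k ≤ min m n`, the probability that some `k` columns of `A` are linearly
dependent (i.e. that the strong column rank is `< k`) is at most
`(n choose k) * p₀^(m - k + 1) / (1 - p₀)`. -/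
theorem strong_column_rank_bound (p₀ : ℝ) (hp₀ : p₀ ∈ Set.Ioo (1 / 2 : ℝ) 1)
    (m n : ℕ)
    (Ω : Type) [MeasureSpace Ω] [IsProbabilityMeasure (ℙ : Measure Ω)]
    (c d : Fin m → Fin n → ℝ) (hd : ∀ i j, d i j ≠ 0)
    (ε : Fin m → Fin n → Ω → ℝ) (p : Fin m → Fin n → ℝ)
    (hmeas : ∀ i j, Measurable (ε i j))
    (hp : ∀ i j, p i j ∈ Set.Ioo (1 - p₀) p₀)
    (hber : ∀ i j, ℙ {ω | ε i j ω = 1} = ENNReal.ofReal (p i j) ∧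
                   ℙ {ω | ε i j ω = 0} = ENNReal.ofReal (1 - p i j))
    (hindep : iIndepFun (β := fun _ : Fin m × Fin n => ℝ)
      (fun q => ε q.1 q.2) ℙ)
    (k : ℕ) (hk1 : 1 ≤ k) (hk2 : k ≤ min m n) :
    (ℙ {ω | ∃ S : Finset (Fin n), S.card = k ∧
        ¬ LinearIndependent ℝ
          (fun j : S => fun i : Fin m => c i (j : Fin n) + d i j * ε i j ω)}).toReal
      ≤ (n.choose k : ℝ) * p₀ ^ (m - k + 1) / (1 - p₀) := by
  classical
  obtain ⟨hp₀l, hp₀u⟩ := hp₀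
  have hp₀pos : 0 < p₀ := by linarith
  have h1p₀ : 0 < 1 - p₀ := by linarith
  have hkm : k ≤ m := hk2.trans (min_le_left m n)
  have hkn : k ≤ n := hk2.trans (min_le_right m n)
  set q : ℝ≥0∞ := ENNReal.ofReal p₀ with hq
  have hq1 : q ≤ 1 := by
    rw [hq, ← ENNReal.ofReal_one]
    exact ENNReal.ofReal_le_ofReal hp₀u.le
  -- the random entries
  set X : Fin m × Fin n → Ω → ℝ := fun z ω => c z.1 z.2 + d z.1 z.2 * ε z.1 z.2 ω with hX
  have hXmeas : ∀ z, Measurable (X z) :=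
    fun z => measurable_const.add ((hmeas z.1 z.2).const_mul _)
  set J : Ω → (Fin m × Fin n → ℝ) := fun ω z => X z ω with hJ
  have hJmeas : Measurable J := measurable_pi_lambda _ hXmeas
  set μq : Fin m × Fin n → Measure ℝ := fun z => Measure.map (X z) ℙ with hμq
  haveI : ∀ z, IsProbabilityMeasure (μq z) :=
    fun z => Measure.isProbabilityMeasure_map (hXmeas z).aemeasurable
  -- atom bound for ε
  have hepsatom : ∀ (i : Fin m) (j : Fin n) (r : ℝ), ℙ {ω | ε i j ω = r} ≤ q := by
    intro i j r
    obtain ⟨hb1, hb0⟩ := hber i j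
    obtain ⟨hpl, hpu⟩ := hp i j
    have hppos : 0 < p i j := by linarith
    have hp1 : p i j < 1 := by linarith
    by_cases h1 : r = 1
    · rw [h1, hb1, hq]
      exact ENNReal.ofReal_le_ofReal hpu.le
    by_cases h0 : r = 0
    · rw [h0, hb0, hq]
      apply ENNReal.ofReal_le_ofReal
      linarith
    -- r ∉ {0, 1}
    have hms1 : MeasurableSet {ω | ε i j ω = 1} := hmeas i j (measurableSet_singleton 1)
    have hms0 : MeasurableSet {ω | ε i j ω = 0} := hmeas i j (measurableSet_singleton 0)
    have hunion : ℙ ({ω | ε i j ω = 1} ∪ {ω | ε i j ω = 0}) = 1 := by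
      rw [measure_union ?_ hms0]
      · rw [hb1, hb0, ← ENNReal.ofReal_add hppos.le (by linarith)]
        norm_num
      · rw [Set.disjoint_left]
        intro ω hω1 hω0
        simp only [Set.mem_setOf_eq] at hω1 hω0
        rw [hω1] at hω0
        norm_num at hω0
    have hcompl : ℙ (({ω | ε i j ω = 1} ∪ {ω | ε i j ω = 0})ᶜ) = 0 := by
      rw [measure_compl (hms1.union hms0) (measure_ne_top _ _), hunion, measure_univ,
        tsub_self]
    have hsub : {ω | ε i j ω = r} ⊆ ({ω | ε i j ω = 1} ∪ {ω | ε i j ω = 0})ᶜ := by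
      intro ω hω
      simp only [Set.mem_setOf_eq] at hω
      simp only [Set.mem_compl_iff, Set.mem_union, Set.mem_setOf_eq, hω]
      push_neg
      exact ⟨h1, h0⟩
    calc ℙ {ω | ε i j ω = r} ≤ 0 := hcompl ▸ measure_mono hsub
      _ ≤ q := zero_le
  -- atom bound for the entries
  have hatom : ∀ z a, μq z {a} ≤ q := by
    intro z a
    rw [hμq]
    rw [Measure.map_apply (hXmeas z) (measurableSet_singleton a)]
    have hset : X z ⁻¹' {a} = {ω | ε z.1 z.2 ω = (a - c z.1 z.2) / d z.1 z.2} := by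
      ext ω
      simp only [Set.mem_preimage, Set.mem_singleton_iff, Set.mem_setOf_eq, hX]
      rw [eq_div_iff (hd z.1 z.2)]
      constructor
      · intro h; linarith [mul_comm (ε z.1 z.2 ω) (d z.1 z.2)]
      · intro h; linarith [mul_comm (ε z.1 z.2 ω) (d z.1 z.2)]
    rw [hset]
    exact hepsatom z.1 z.2 _
  -- independence of the entries
  have hXind : iIndepFun (β := fun _ : Fin m × Fin n => ℝ) X ℙ := by
    have := hindep.comp (fun z : Fin m × Fin n => fun x : ℝ => c z.1 z.2 + d z.1 z.2 * x)
      (fun z => measurable_const.add (measurable_id.const_mul _))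
    exact this
  have hmap : Measure.map J ℙ = Measure.pi μq := map_joint_eq_pi X hXmeas hXind
  -- event decomposition
  set F : Finset (Finset (Fin n)) := Finset.powersetCard k Finset.univ with hF
  set ES : Finset (Fin n) → Set Ω := fun S =>
    {ω | ¬ LinearIndependent ℝ
      (fun j : S => fun i : Fin m => c i (j : Fin n) + d i j * ε i j ω)} with hES
  have hsubE : {ω | ∃ S : Finset (Fin n), S.card = k ∧
        ¬ LinearIndependent ℝ
          (fun j : S => fun i : Fin m => c i (j : Fin n) + d i j * ε i j ω)}
      ⊆ ⋃ S ∈ F, ES S := by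
    intro ω hω
    obtain ⟨S, hScard, hSdep⟩ := hω
    exact Set.mem_biUnion (Finset.mem_powersetCard_univ.2 hScard) hSdep
  -- per-S bound
  have hper : ∀ S ∈ F, ℙ (ES S) ≤ ∑ t ∈ Finset.range k, q ^ (m - t) := by
    intro S hSF
    have hScard : S.card = k := Finset.mem_powersetCard_univ.1 hSF
    set DS : Set (Fin m × Fin n → ℝ) := {M : Fin m × Fin n → ℝ |
        ¬ LinearIndependent ℝ (fun j : S => fun i : Fin m => M (i, (j : Fin n)))} with hDS
    have hDSmeas : MeasurableSet DS := by
      have hcont : Continuous (fun M : Fin m × Fin n → ℝ =>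
          (fun j : S => fun i : Fin m => M (i, (j : Fin n)))) :=
        continuous_pi fun j => continuous_pi fun i => continuous_apply _
      have : DS = (fun M : Fin m × Fin n → ℝ =>
          (fun j : S => fun i : Fin m => M (i, (j : Fin n)))) ⁻¹'
          {v : S → Fin m → ℝ | LinearIndependent ℝ v}ᶜ := rfl
      rw [this]
      exact (isOpen_setOf_linearIndependent.preimage hcont).measurableSet.compl
    have hEeq : ES S = J ⁻¹' DS := rfl
    rw [hEeq, ← Measure.map_apply hJmeas hDSmeas, hmap]
    exact dep_set_bound μq q hq1 hatom S hScard
  -- total bound in ℝ≥0∞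
  have htotal : ℙ {ω | ∃ S : Finset (Fin n), S.card = k ∧
        ¬ LinearIndependent ℝ
          (fun j : S => fun i : Fin m => c i (j : Fin n) + d i j * ε i j ω)}
      ≤ ENNReal.ofReal ((n.choose k : ℝ) * p₀ ^ (m - k + 1) / (1 - p₀)) := by
    calc ℙ _ ≤ ℙ (⋃ S ∈ F, ES S) := measure_mono hsubE
      _ ≤ ∑ S ∈ F, ℙ (ES S) := measure_biUnion_finset_le F ES
      _ ≤ ∑ _S ∈ F, ∑ t ∈ Finset.range k, q ^ (m - t) := Finset.sum_le_sum hper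
      _ = (n.choose k : ℝ≥0∞) * ∑ t ∈ Finset.range k, q ^ (m - t) := by
          rw [Finset.sum_const, hF, Finset.card_powersetCard, Finset.card_univ,
            Fintype.card_fin, nsmul_eq_mul]
      _ ≤ ENNReal.ofReal ((n.choose k : ℝ) * p₀ ^ (m - k + 1) / (1 - p₀)) := by
          have hsum : ∑ t ∈ Finset.range k, q ^ (m - t)
              = ENNReal.ofReal (∑ t ∈ Finset.range k, p₀ ^ (m - t)) := by
            rw [ENNReal.ofReal_sum_of_nonneg (fun t _ => pow_nonneg hp₀pos.le _)]
            refine Finset.sum_congr rfl fun t _ => ?_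
            rw [hq, ← ENNReal.ofReal_pow hp₀pos.le]
          rw [hsum]
          calc (n.choose k : ℝ≥0∞) * ENNReal.ofReal (∑ t ∈ Finset.range k, p₀ ^ (m - t))
              ≤ (n.choose k : ℝ≥0∞) * ENNReal.ofReal (p₀ ^ (m - k + 1) / (1 - p₀)) := by
                exact mul_le_mul_right (ENNReal.ofReal_le_ofReal
                  (geom_bound p₀ hp₀pos hp₀u m k hk1 hkm)) _
            _ = ENNReal.ofReal ((n.choose k : ℝ) * (p₀ ^ (m - k + 1) / (1 - p₀))) := by
                rw [ENNReal.ofReal_mul (by positivity)]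
                congr 1
                rw [ENNReal.ofReal_natCast]
            _ = ENNReal.ofReal ((n.choose k : ℝ) * p₀ ^ (m - k + 1) / (1 - p₀)) := by
                rw [mul_div_assoc]
  refine ENNReal.toReal_le_of_le_ofReal ?_ htotal
  positivity
end

section
/- Let p_0 ∈ (1/2, 1) and let A be an m × k random matrix (k ≤ m) whose entries have the form a_{ij} = c_{ij} + d_{ij} ε_{ij}, where the c_{ij} are fixed real numbers, the d_{ij} are fixed nonzero real numbers, and the ε_{ij} are mutually independent Bernoulli random variables with parameters p_{ij} ∈ (1 - p_0, p_0). Then the probability that the k columns of A are linearly dependent (i.e., rank A < k) is at most p_0^{m-k+1} / (1 - p_0). -/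
open MeasureTheory ProbabilityTheory Matrix
open scoped ENNReal

/-- Columns of a rectangular real matrix are linearly independent iff the Gram
determinant is nonzero. -/
lemma gram_det_ne_zero_iff {m r : ℕ} (M : Matrix (Fin m) (Fin r) ℝ) :
    LinearIndependent ℝ (fun j i => M i j) ↔ (Mᵀ * M).det ≠ 0 := by
  have key : ∀ g : Fin r → ℝ, (∑ j, g j • (fun i => M i j)) = M.mulVec g := by
    intro g
    funext i
    simp [Matrix.mulVec, dotProduct, Finset.sum_apply, mul_comm]
  constructor
  · intro h hdet
    have hnu : ¬ IsUnit (Mᵀ * M) := by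
      rw [Matrix.isUnit_iff_isUnit_det]
      simpa [isUnit_iff_ne_zero] using hdet
    have hninj : ¬ Function.Injective (Mᵀ * M).mulVec := fun hinj =>
      hnu (Matrix.mulVec_injective_iff_isUnit.mp hinj)
    rw [Function.not_injective_iff] at hninj
    obtain ⟨x, y, hxy, hne⟩ := hninj
    set g := x - y with hg
    have hzero : (Mᵀ * M).mulVec g = 0 := by
      rw [hg, Matrix.mulVec_sub, hxy, sub_self]
    have hMg : M.mulVec g = 0 := by
      have h1 : g ⬝ᵥ ((Mᵀ * M).mulVec g) = 0 := by rw [hzero, dotProduct_zero]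
      rw [← Matrix.mulVec_mulVec, dotProduct_mulVec, Matrix.vecMul_transpose] at h1
      exact dotProduct_self_eq_zero.mp h1
    have := Fintype.linearIndependent_iff.mp h g (by rw [key, hMg])
    exact hne (sub_eq_zero.mp (funext this))
  · intro hdet
    refine Fintype.linearIndependent_iff.mpr (fun g hgsum => ?_)
    have hMg : M.mulVec g = 0 := by rw [← key]; exact hgsum
    have hinj : Function.Injective (Mᵀ * M).mulVec :=
      Matrix.mulVec_injective_iff_isUnit.mpr
        ((Matrix.isUnit_iff_isUnit_det _).mpr (isUnit_iff_ne_zero.mpr hdet))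
    have : (Mᵀ * M).mulVec g = (Mᵀ * M).mulVec 0 := by
      rw [← Matrix.mulVec_mulVec, hMg, Matrix.mulVec_zero, Matrix.mulVec_zero]
    intro i
    exact congrFun (hinj this) i

/-- For the span of `r` vectors in `ι → ℝ` there is a set `T` of at most `r`
coordinates such that every coordinate of a vector in the span is a function of
its coordinates in `T`. -/
lemma exists_coord_determining {ι : Type*} [Fintype ι] [DecidableEq ι] {r : ℕ}
    (u : Fin r → ι → ℝ) :
    ∃ T : Finset ι, T.card ≤ r ∧ ∃ g : ι → (ι → ℝ) → ℝ,
      (∀ i x y, Set.EqOn x y ↑T → g i x = g i y) ∧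
      (∀ v ∈ Submodule.span ℝ (Set.range u), ∀ i ∉ T, v i = g i v) := by
  classical
  set cols : ι → (Fin r → ℝ) := fun i l => u l i with hcols
  obtain ⟨b, hbsub, hbspan, hbind⟩ := exists_linearIndependent ℝ (Set.range cols)
  have hbfin : b.Finite := hbind.setFinite
  haveI : Fintype b := hbfin.fintype
  have hcard : Fintype.card b ≤ r := by
    have := hbind.fintype_card_le_finrank
    simpa [Module.finrank_pi] using this
  set f : b → ι := fun w => Classical.choose (hbsub w.2) with hf
  have hfspec : ∀ w : b, cols (f w) = (w : Fin r → ℝ) := fun w =>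
    Classical.choose_spec (hbsub w.2)
  set T : Finset ι := Finset.image f Finset.univ with hT
  have hTcard : T.card ≤ r := le_trans (Finset.card_image_le.trans (by simp)) hcard
  have hmem : ∀ i, cols i ∈ Submodule.span ℝ (cols '' ↑T) := by
    intro i
    have h1 : cols i ∈ Submodule.span ℝ (Set.range cols) :=
      Submodule.subset_span (Set.mem_range_self i)
    rw [← hbspan] at h1
    refine Submodule.span_le.mpr ?_ h1
    intro w hw
    refine Submodule.subset_span ⟨f ⟨w, hw⟩, ?_, hfspec ⟨w, hw⟩⟩
    simp [hT]
  have hrep : ∀ i, ∃ l : ι →₀ ℝ, l ∈ Finsupp.supported ℝ ℝ ↑T ∧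
      Finsupp.linearCombination ℝ cols l = cols i := by
    intro i
    exact (Finsupp.mem_span_image_iff_linearCombination ℝ).mp (hmem i)
  choose l hlsupp hlsum using hrep
  refine ⟨T, hTcard, fun i x => ∑ t ∈ T, l i t * x t, ?_, ?_⟩
  · intro i x y hxy
    exact Finset.sum_congr rfl fun t ht => by rw [hxy ht]
  · intro v hv i _
    obtain ⟨β, hβ⟩ := (Submodule.mem_span_range_iff_exists_fun ℝ).mp hv
    -- coordinates of cols i as combination over T
    have hcol : ∀ lf : Fin r, u lf i = ∑ t ∈ T, l i t * u lf t := by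
      intro lf
      have h2 := congrFun (hlsum i) lf
      rw [Finsupp.linearCombination_apply, Finsupp.sum] at h2
      have h3 : ∑ a ∈ (l i).support, l i a • cols a = ∑ t ∈ T, l i t • cols t := by
        refine Finset.sum_subset ?_ ?_
        · exact fun a ha => (hlsupp i) ha
        · intro t _ ht
          rw [Finsupp.notMem_support_iff.mp ht, zero_smul]
      rw [h3] at h2
      have h4 := h2
      simp only [Finset.sum_apply, Pi.smul_apply, smul_eq_mul] at h4
      simpa [hcols] using h4.symm
    have hvc : ∀ t, v t = ∑ lf, β lf * u lf t := by
      intro t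
      have := congrFun hβ t
      simpa [Finset.sum_apply, Pi.smul_apply, smul_eq_mul] using this.symm
    rw [hvc i]
    have : ∑ lf, β lf * u lf i = ∑ lf, β lf * ∑ t ∈ T, l i t * u lf t := by
      refine Finset.sum_congr rfl fun lf _ => by rw [hcol lf]
    rw [this]
    simp_rw [Finset.mul_sum]
    rw [Finset.sum_comm]
    refine Finset.sum_congr rfl fun t _ => ?_
    rw [hvc t, Finset.mul_sum]
    refine Finset.sum_congr rfl fun lf _ => by ring

lemma pi_measure_le_of_determined {ι : Type*} [Fintype ι] [DecidableEq ι]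
    (ν : ι → Measure ℝ) [∀ i, IsProbabilityMeasure (ν i)]
    (P : ℝ≥0∞) (hat : ∀ i t, ν i {t} ≤ P)
    (W : Set (ι → ℝ)) (hWm : MeasurableSet W) (T : Finset ι)
    (g : ι → (ι → ℝ) → ℝ)
    (hg1 : ∀ i x y, Set.EqOn x y ↑T → g i x = g i y)
    (hg2 : ∀ x ∈ W, ∀ i ∉ T, x i = g i x) :
    Measure.pi ν W ≤ P ^ (Fintype.card ι - T.card) := by
  classical
  let p : ι → Prop := fun i => i ∈ T
  let e := MeasurableEquiv.piEquivPiSubtypeProd (fun _ : ι => ℝ) p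
  have hmp := measurePreserving_piEquivPiSubtypeProd (fun i : ι => ν i) p
  have hmps := MeasurePreserving.symm e hmp
  have hWm' : MeasurableSet (e.symm ⁻¹' W) := e.symm.measurable hWm
  have h1 := hmps.measure_preimage hWm.nullMeasurableSet
  have hcard : Fintype.card {i // ¬ p i} = Fintype.card ι - T.card := by
    rw [Fintype.card_subtype_compl]
    congr 1
    simp [p, Fintype.card_subtype]
  have happ : ∀ (a : {i // p i} → ℝ) (b : {i // ¬ p i} → ℝ) (j : ι),
      e.symm (a, b) j = if h : p j then a ⟨j, h⟩ else b ⟨j, h⟩ := by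
    intro a b j
    simp [e, MeasurableEquiv.piEquivPiSubtypeProd, Equiv.piEquivPiSubtypeProd_symm_apply]
  rw [show Measure.pi ν = Measure.pi (fun i : ι => ν i) from rfl, ← h1,
    Measure.prod_apply hWm']
  refine le_trans (lintegral_mono (g := fun _ => P ^ (Fintype.card ι - T.card))
    (fun a => ?_)) ?_
  · have hsub : (Prod.mk a ⁻¹' (e.symm ⁻¹' W)) ⊆
        Set.pi Set.univ (fun i : {i // ¬ p i} => {g i.1 (e.symm (a, fun _ => 0))}) := by
      intro b hb
      simp only [Set.mem_preimage] at hb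
      intro i _
      have heq : Set.EqOn (e.symm (a, b)) (e.symm (a, fun _ => 0)) ↑T := by
        intro t ht
        rw [happ, happ]
        have hpt : p t := ht
        rw [dif_pos hpt, dif_pos hpt]
      rw [Set.mem_singleton_iff]
      have h5 : e.symm (a, b) i.1 = g i.1 (e.symm (a, b)) := hg2 _ hb i.1 i.2
      have h6 : e.symm (a, b) i.1 = b i := by
        rw [happ, dif_neg i.2]
      rw [← h6, h5]
      exact hg1 _ _ _ heq
    refine le_trans (measure_mono hsub) ?_
    rw [Measure.pi_pi]
    calc ∏ i : {i // ¬ p i}, ν i.1 {g i.1 (e.symm (a, fun _ => 0))}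
        ≤ ∏ _i : {i // ¬ p i}, P := Finset.prod_le_prod' fun i _ => hat i.1 _
      _ = P ^ (Fintype.card ι - T.card) := by
          rw [Finset.prod_const, Finset.card_univ, hcard]
  · rw [lintegral_const]
    simp

/-- **Probability that a full set of random columns is dependent.**
Let `A` be an `m × k` random matrix (`k ≤ m`) with entries `a i j = c i j + d i j * ε i j`,
where the `c i j` are fixed reals, the `d i j` are fixed nonzero reals, and the `ε i j`
are independent Bernoulli random variables with parameters in `(1 - p₀, p₀)`,
`p₀ ∈ (1/2, 1)`. Then the probability that the `k` columns of `A` are linearly dependent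
is at most `p₀^(m - k + 1) / (1 - p₀)`. -/
theorem columns_dependent_bound (p₀ : ℝ) (hp₀ : p₀ ∈ Set.Ioo (1 / 2 : ℝ) 1)
    (m k : ℕ) (hkm : k ≤ m)
    (Ω : Type) [MeasureSpace Ω] [IsProbabilityMeasure (ℙ : Measure Ω)]
    (c d : Fin m → Fin k → ℝ) (hd : ∀ i j, d i j ≠ 0)
    (ε : Fin m → Fin k → Ω → ℝ) (p : Fin m → Fin k → ℝ)
    (hmeas : ∀ i j, Measurable (ε i j))
    (hp : ∀ i j, p i j ∈ Set.Ioo (1 - p₀) p₀)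
    (hber : ∀ i j, ℙ {ω | ε i j ω = 1} = ENNReal.ofReal (p i j) ∧
                   ℙ {ω | ε i j ω = 0} = ENNReal.ofReal (1 - p i j))
    (hindep : iIndepFun
      (fun q : Fin m × Fin k => ε q.1 q.2) ℙ) :
    (ℙ {ω | ¬ LinearIndependent ℝ
        (fun j : Fin k => fun i : Fin m => c i j + d i j * ε i j ω)}).toReal
      ≤ p₀ ^ (m - k + 1) / (1 - p₀) := by
  classical
  obtain ⟨hp₀l, hp₀u⟩ := hp₀
  have hp₀pos : 0 < p₀ := lt_trans (by norm_num) hp₀l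
  have h1p₀ : 0 < 1 - p₀ := by linarith
  -- the index type and the one-variable distributions
  set ι := Fin m × Fin k with hι
  let ν : ι → Measure ℝ := fun q => Measure.map (ε q.1 q.2) ℙ
  haveI hνprob : ∀ q : ι, IsProbabilityMeasure (ν q) :=
    fun q => Measure.isProbabilityMeasure_map (hmeas q.1 q.2).aemeasurable
  set P : ℝ≥0∞ := ENNReal.ofReal p₀ with hP
  have hP1 : P ≤ 1 := ENNReal.ofReal_le_one.mpr hp₀u.le
  -- atom bound
  have hatom : ∀ (q : ι) (t : ℝ), ν q {t} ≤ P := by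
    intro q t
    obtain ⟨hb1, hb0⟩ := hber q.1 q.2
    obtain ⟨hpl, hpu⟩ := hp q.1 q.2
    have hνt : ν q {t} = ℙ {ω | ε q.1 q.2 ω = t} := by
      rw [Measure.map_apply (hmeas q.1 q.2) (measurableSet_singleton t)]
      rfl
    rw [hνt]
    by_cases h1 : t = 1
    · subst h1; rw [hb1]; exact ENNReal.ofReal_le_ofReal hpu.le
    by_cases h0 : t = 0
    · subst h0; rw [hb0]; exact ENNReal.ofReal_le_ofReal (by linarith)
    -- otherwise the set is null
    have hms0 : MeasurableSet {ω | ε q.1 q.2 ω = 0} := by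
      exact (hmeas q.1 q.2) (measurableSet_singleton (0:ℝ))
    have hms1 : MeasurableSet {ω | ε q.1 q.2 ω = 1} := by
      exact (hmeas q.1 q.2) (measurableSet_singleton (1:ℝ))
    have hdisj : Disjoint {ω | ε q.1 q.2 ω = 0} {ω | ε q.1 q.2 ω = 1} := by
      rw [Set.disjoint_left]
      intro ω hω0 hω1
      simp only [Set.mem_setOf_eq] at hω0 hω1
      rw [hω0] at hω1; norm_num at hω1
    have hunion : ℙ ({ω | ε q.1 q.2 ω = 0} ∪ {ω | ε q.1 q.2 ω = 1}) = 1 := by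
      rw [measure_union hdisj hms1, hb0, hb1, ← ENNReal.ofReal_add (by linarith) (by linarith)]
      norm_num
    have hsubc : {ω | ε q.1 q.2 ω = t} ⊆ ({ω | ε q.1 q.2 ω = 0} ∪ {ω | ε q.1 q.2 ω = 1})ᶜ := by
      intro ω hω
      simp only [Set.mem_setOf_eq] at hω
      simp only [Set.mem_compl_iff, Set.mem_union, Set.mem_setOf_eq, hω]
      push_neg
      exact ⟨h0, h1⟩
    have hcompl : ℙ (({ω | ε q.1 q.2 ω = 0} ∪ {ω | ε q.1 q.2 ω = 1})ᶜ) = 0 := by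
      rw [measure_compl (hms0.union hms1) (measure_ne_top _ _), hunion, measure_univ]
      simp
    calc ℙ {ω | ε q.1 q.2 ω = t} ≤ 0 := hcompl ▸ measure_mono hsubc
      _ ≤ P := zero_le
  -- joint map and product measure
  set Φ : Ω → (ι → ℝ) := fun ω q => ε q.1 q.2 ω with hΦdef
  have hΦ : Measurable Φ := measurable_pi_lambda _ (fun q => hmeas q.1 q.2)
  have hmap : Measure.map Φ ℙ = Measure.pi ν := by
    refine (Measure.pi_eq (fun s hs => ?_)).symm
    rw [Measure.map_apply hΦ (MeasurableSet.univ_pi hs)]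
    have hpre : Φ ⁻¹' (Set.univ.pi s) = ⋂ q : ι, ε q.1 q.2 ⁻¹' s q := by
      ext ω; simp [hΦdef, Set.mem_univ_pi]
    rw [hpre, hindep.meas_iInter (fun q => ⟨s q, hs q, rfl⟩)]
    exact Finset.prod_congr rfl fun q _ =>
      (Measure.map_apply (hmeas q.1 q.2) (hs q)).symm
  -- prefix families
  let pref : (ι → ℝ) → (t : ℕ) → Fin t → Fin m → ℝ := fun x t l i =>
    if h : (l : ℕ) < k then c i ⟨l, h⟩ + d i ⟨l, h⟩ * x (i, ⟨l, h⟩) else 0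
  -- Gram determinants and measurability
  let Mt : (t : ℕ) → (ι → ℝ) → Matrix (Fin m) (Fin t) ℝ := fun t x =>
    Matrix.of fun i l => pref x t l i
  let Dt : (t : ℕ) → (ι → ℝ) → ℝ := fun t x => ((Mt t x)ᵀ * Mt t x).det
  have hcont : ∀ t, Continuous (Dt t) := by
    intro t
    have hM : Continuous fun x => Mt t x := by
      refine continuous_matrix (fun i l => ?_)
      by_cases h : (l : ℕ) < k
      · simp only [Mt, pref, Matrix.of_apply, dif_pos h]
        exact continuous_const.add (continuous_const.mul (continuous_apply _))
      · simp only [Mt, pref, Matrix.of_apply, dif_neg h]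
        exact continuous_const
    exact Continuous.matrix_det (Continuous.matrix_mul (Continuous.matrix_transpose hM) hM)
  have hiff : ∀ t x, LinearIndependent ℝ (pref x t) ↔ Dt t x ≠ 0 := fun t x =>
    gram_det_ne_zero_iff (Mt t x)
  -- the events
  let A : Fin k → Set (ι → ℝ) := fun j =>
    {x | LinearIndependent ℝ (pref x j.1) ∧ ¬ LinearIndependent ℝ (pref x (j.1 + 1))}
  have hAm : ∀ j, MeasurableSet (A j) := by
    intro j
    have : A j = (Dt j.1) ⁻¹' {0}ᶜ ∩ (Dt (j.1 + 1)) ⁻¹' {0} := by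
      ext x
      simp only [A, Set.mem_setOf_eq, Set.mem_inter_iff, Set.mem_preimage,
        Set.mem_compl_iff, Set.mem_singleton_iff, hiff, not_not]
    rw [this]
    exact (((hcont j.1).measurable (measurableSet_singleton (0:ℝ)).compl)).inter
      ((hcont (j.1+1)).measurable (measurableSet_singleton (0:ℝ)))
  -- decomposition
  have hdecomp : ∀ x, ¬ LinearIndependent ℝ (pref x k) → ∃ j : Fin k, x ∈ A j := by
    intro x hx
    by_contra h
    push_neg at h
    have hall : ∀ t, t ≤ k → LinearIndependent ℝ (pref x t) := by
      intro t
      induction t with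
      | zero => exact fun _ => linearIndependent_empty_type
      | succ n ih =>
        intro hn
        by_contra h2
        exact h ⟨n, hn⟩ ⟨ih (Nat.le_of_succ_le hn), h2⟩
    exact hx (hall k le_rfl)
  -- snoc structure of prefixes
  have hsnoc : ∀ (x : ι → ℝ) (t : ℕ) (ht : t < k),
      pref x (t + 1) = Fin.snoc (pref x t)
        (fun i => c i ⟨t, ht⟩ + d i ⟨t, ht⟩ * x (i, ⟨t, ht⟩)) := by
    intro x t ht
    funext l
    refine Fin.lastCases ?_ ?_ l
    · rw [Fin.snoc_last]
      funext i
      simp only [pref, Fin.val_last, dif_pos ht]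
    · intro l'
      rw [Fin.snoc_castSucc]
      funext i
      have h1 : (l'.castSucc : ℕ) < k := lt_trans (by simpa using l'.2) ht
      have h2 : (l' : ℕ) < k := by simpa using h1
      simp only [pref, Fin.coe_castSucc, dif_pos h2]
  -- per-event bound
  have hbound : ∀ j : Fin k, Measure.pi ν (A j) ≤ P ^ (m - (j : ℕ)) := by
    intro j
    let pj : ι → Prop := fun q => q.2 ≠ j
    let e' := MeasurableEquiv.piEquivPiSubtypeProd (fun _ : ι => ℝ) pj
    have hmp' := measurePreserving_piEquivPiSubtypeProd (fun q : ι => ν q) pj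
    have hmps' := MeasurePreserving.symm e' hmp'
    have h1 := hmps'.measure_preimage (hAm j).nullMeasurableSet
    have hAm' : MeasurableSet (e'.symm ⁻¹' (A j)) := e'.symm.measurable (hAm j)
    rw [show Measure.pi ν = Measure.pi (fun q : ι => ν q) from rfl, ← h1,
      Measure.prod_apply hAm']
    have hcardcol : Fintype.card {q : ι // ¬ pj q} = m := by
      have e2 : {q : ι // ¬ pj q} ≃ Fin m := by
        refine ⟨fun q => q.1.1, fun i => ⟨(i, j), by simp [pj]⟩, ?_, ?_⟩
        · intro q
          have hq2 : q.1.2 = j := not_not.mp q.2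
          exact Subtype.ext (Prod.ext rfl hq2.symm)
        · intro i; rfl
      rw [Fintype.card_congr e2, Fintype.card_fin]
    have happ' : ∀ (a : {q // pj q} → ℝ) (b : {q // ¬ pj q} → ℝ) (q : ι),
        e'.symm (a, b) q = if h : pj q then a ⟨q, h⟩ else b ⟨q, h⟩ := by
      intro a b q
      simp [e', MeasurableEquiv.piEquivPiSubtypeProd, Equiv.piEquivPiSubtypeProd_symm_apply]
    refine le_trans (lintegral_mono (g := fun _ => P ^ (m - (j:ℕ))) fun a => ?_) ?_
    swap
    · rw [lintegral_const]; simp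
    -- the previous columns, as functions of `a`
    have hjk : ∀ l : Fin (j:ℕ), (l : ℕ) < k := fun l => lt_trans l.2 j.2
    let u : Fin (j:ℕ) → Fin m → ℝ := fun l i =>
      c i ⟨l.1, hjk l⟩ + d i ⟨l.1, hjk l⟩ *
        a ⟨(i, ⟨l.1, hjk l⟩), Fin.ne_of_val_ne (Nat.ne_of_lt l.2)⟩
    obtain ⟨T₀, hT₀card, g₀, hg₀1, hg₀2⟩ := exists_coord_determining u
    let colb : ({q // ¬ pj q} → ℝ) → Fin m → ℝ := fun b i =>
      c i j + d i j * b ⟨(i, j), by simp [pj]⟩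
    let V := Submodule.span ℝ (Set.range u)
    let W' : Set ({q // ¬ pj q} → ℝ) := {b | colb b ∈ V}
    have hW'm : MeasurableSet W' := by
      have hcb : Continuous colb := continuous_pi fun i =>
        continuous_const.add (continuous_const.mul (continuous_apply _))
      exact (IsClosed.preimage hcb (Submodule.closed_of_finiteDimensional V)).measurableSet
    let T' : Finset {q // ¬ pj q} :=
      T₀.image (fun i => (⟨(i, j), by simp [pj]⟩ : {q // ¬ pj q}))
    let g' : {q // ¬ pj q} → ({q // ¬ pj q} → ℝ) → ℝ := fun q b =>
      (g₀ q.1.1 (colb b) - c q.1.1 j) / d q.1.1 j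
    have hg1' : ∀ q x y, Set.EqOn x y ↑T' → g' q x = g' q y := by
      intro q x y hxy
      have heq : Set.EqOn (colb x) (colb y) ↑T₀ := by
        intro i hi
        have hmem : (⟨(i, j), by simp [pj]⟩ : {q // ¬ pj q}) ∈ T' :=
          Finset.mem_image_of_mem _ hi
        simp only [colb]
        rw [hxy hmem]
      simp only [g']
      rw [hg₀1 _ _ _ heq]
    have hg2' : ∀ b ∈ W', ∀ q ∉ T', b q = g' q b := by
      intro b hb q hq
      have hq2 : q.1.2 = j := not_not.mp q.2
      have hqeq : (⟨(q.1.1, j), by simp [pj]⟩ : {q // ¬ pj q}) = q :=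
        Subtype.ext (Prod.ext rfl hq2.symm)
      have hqT : q.1.1 ∉ T₀ := by
        intro hmem
        exact hq (hqeq ▸ Finset.mem_image_of_mem _ hmem)
      have hv := hg₀2 (colb b) hb q.1.1 hqT
      have hbq : colb b q.1.1 = c q.1.1 j + d q.1.1 j * b q := by
        simp only [colb]
        rw [congrArg b hqeq]
      rw [hbq] at hv
      simp only [g']
      rw [eq_div_iff (hd q.1.1 j)]
      linarith [hv]
    haveI : ∀ q : {q : ι // ¬ pj q}, IsProbabilityMeasure ((fun q : {q : ι // ¬ pj q} => ν q.1) q) :=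
      fun q => hνprob q.1
    have hpib := pi_measure_le_of_determined (fun q : {q : ι // ¬ pj q} => ν q.1) P
      (fun q t => hatom q.1 t) W' hW'm T' g' hg1' hg2'
    have hsub : Prod.mk a ⁻¹' (e'.symm ⁻¹' A j) ⊆ W' := by
      intro b hb
      simp only [Set.mem_preimage] at hb
      simp only [A, Set.mem_setOf_eq] at hb
      obtain ⟨hind, hdep⟩ := hb
      have hprefj : pref (e'.symm (a, b)) (j:ℕ) = u := by
        funext l i
        have hl : (l:ℕ) < k := hjk l
        simp only [pref, dif_pos hl]
        rw [happ' a b (i, ⟨l.1, hl⟩),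
          dif_pos (show pj (i, ⟨l.1, hl⟩) from Fin.ne_of_val_ne (Nat.ne_of_lt l.2))]
      have hsn := hsnoc (e'.symm (a, b)) (j:ℕ) j.2
      have hcol : (fun i => c i ⟨(j:ℕ), j.2⟩ + d i ⟨(j:ℕ), j.2⟩ *
          (e'.symm (a, b)) (i, ⟨(j:ℕ), j.2⟩)) = colb b := by
        funext i
        have hjj : (⟨(j:ℕ), j.2⟩ : Fin k) = j := Fin.eta j j.2
        rw [hjj, happ' a b (i, j), dif_neg (show ¬ pj (i, j) by simp [pj])]
      rw [hsn, hcol, hprefj] at hdep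
      rw [hprefj] at hind
      rw [linearIndependent_fin_snoc] at hdep
      push_neg at hdep
      exact hdep hind
    have hT'card : T'.card ≤ (j:ℕ) := le_trans Finset.card_image_le hT₀card
    refine le_trans (measure_mono hsub) (le_trans hpib ?_)
    rw [hcardcol]
    refine pow_le_pow_right_of_le_one' hP1 ?_
    omega
  -- union bound
  have hsubev : {ω | ¬ LinearIndependent ℝ
      (fun j : Fin k => fun i : Fin m => c i j + d i j * ε i j ω)}
      ⊆ ⋃ j : Fin k, Φ ⁻¹' (A j) := by
    intro ω hω
    simp only [Set.mem_setOf_eq] at hω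
    have hx : ¬ LinearIndependent ℝ (pref (Φ ω) k) := by
      intro hcon
      apply hω
      have hfam : (fun j : Fin k => fun i : Fin m => c i j + d i j * ε i j ω)
          = pref (Φ ω) k := by
        funext j i
        rcases j with ⟨jv, hjv⟩
        simp only [pref, dif_pos hjv]
        rfl
      rw [hfam]
      exact hcon
    obtain ⟨j, hj⟩ := hdecomp (Φ ω) hx
    exact Set.mem_iUnion.mpr ⟨j, hj⟩
  have hPe : ℙ {ω | ¬ LinearIndependent ℝ
      (fun j : Fin k => fun i : Fin m => c i j + d i j * ε i j ω)}
      ≤ ∑ j : Fin k, P ^ (m - (j:ℕ)) := by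
    refine le_trans (measure_mono hsubev)
      (le_trans (measure_iUnion_fintype_le _ _) ?_)
    refine Finset.sum_le_sum fun j _ => ?_
    have hPA : ℙ (Φ ⁻¹' A j) = Measure.pi ν (A j) := by
      rw [← hmap, Measure.map_apply hΦ (hAm j)]
    rw [hPA]
    exact hbound j
  -- pass to real numbers
  have hS : (∑ j : Fin k, P ^ (m - (j:ℕ)))
      = ENNReal.ofReal (∑ j : Fin k, p₀ ^ (m - (j:ℕ))) := by
    rw [ENNReal.ofReal_sum_of_nonneg (fun j _ => pow_nonneg hp₀pos.le _)]
    exact Finset.sum_congr rfl fun j _ => by rw [hP, ← ENNReal.ofReal_pow hp₀pos.le]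
  rw [hS] at hPe
  have htr : (ℙ {ω | ¬ LinearIndependent ℝ
      (fun j : Fin k => fun i : Fin m => c i j + d i j * ε i j ω)}).toReal
      ≤ ∑ j : Fin k, p₀ ^ (m - (j:ℕ)) := by
    refine le_trans (ENNReal.toReal_mono ENNReal.ofReal_ne_top hPe) ?_
    rw [ENNReal.toReal_ofReal (Finset.sum_nonneg fun j _ => pow_nonneg hp₀pos.le _)]
  refine le_trans htr ?_
  rw [Fin.sum_univ_eq_sum_range (fun i => p₀ ^ (m - i)) k]
  have hsplit : ∀ i ∈ Finset.range k, p₀ ^ (m - i) = p₀ ^ (m - k + 1) * p₀ ^ (k - 1 - i) := by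
    intro i hi
    rw [← pow_add]
    congr 1
    have := Finset.mem_range.mp hi
    omega
  rw [Finset.sum_congr rfl hsplit, ← Finset.mul_sum]
  have hgeom : ∑ i ∈ Finset.range k, p₀ ^ (k - 1 - i) = ∑ i ∈ Finset.range k, p₀ ^ i :=
    Finset.sum_range_reflect (fun i => p₀ ^ i) k
  rw [hgeom]
  have hsle : ∑ i ∈ Finset.range k, p₀ ^ i ≤ 1 / (1 - p₀) := by
    rw [le_div_iff₀ h1p₀]
    have hg := geom_sum_mul p₀ k
    nlinarith [pow_nonneg hp₀pos.le k]
  calc p₀ ^ (m - k + 1) * ∑ i ∈ Finset.range k, p₀ ^ i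
      ≤ p₀ ^ (m - k + 1) * (1 / (1 - p₀)) :=
        mul_le_mul_of_nonneg_left hsle (pow_nonneg hp₀pos.le _)
    _ = p₀ ^ (m - k + 1) / (1 - p₀) := by rw [mul_one_div]
end

section
/- Let μ be a Borel probability measure on ℝ, let x_- ∈ ℝ, set p_- = μ((-∞, x_-)), and assume 0 < p_- < 1. Let G(t) = inf{u ∈ ℝ : F(u) ≥ t} where F(u) = μ((-∞, u]). Then for every t ∈ (0,1), one has G(p_- · t) < x_- ≤ G(p_- + (1 - p_-)·t); in particular G(p_- + (1 - p_-)·t) − G(p_- · t) > 0 for all t ∈ (0,1). -/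
open MeasureTheory Filter
open scoped ENNReal Topology

/-- **Strict separation of the two branches of the Bernoulli decomposition.**
If `p₋ = μ((-∞, x₋)) ∈ (0,1)`, then for every `t ∈ (0,1)` one has
`G(p₋ t) < x₋ ≤ G(p₋ + (1 - p₋) t)`; in particular
`G(p₋ + (1 - p₋) t) - G(p₋ t) > 0`. -/
theorem quantile_strict_separation (μ : Measure ℝ) [IsProbabilityMeasure μ]
    (F : ℝ → ℝ) (hF : ∀ u, F u = (μ (Set.Iic u)).toReal)
    (G : ℝ → ℝ) (hG : ∀ t, G t = sInf {u : ℝ | t ≤ F u})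
    (xm : ℝ) (pm : ℝ) (hpm : pm = (μ (Set.Iio xm)).toReal)
    (hpm_mem : pm ∈ Set.Ioo (0 : ℝ) 1) :
    ∀ t ∈ Set.Ioo (0 : ℝ) 1,
      (G (pm * t) < xm ∧ xm ≤ G (pm + (1 - pm) * t)) ∧
      0 < G (pm + (1 - pm) * t) - G (pm * t) := by
  obtain ⟨hpm0, hpm1⟩ := hpm_mem
  intro t ⟨ht0, ht1⟩
  -- general facts
  have hfin : ∀ s : Set ℝ, μ s ≠ ∞ := fun s => measure_ne_top μ s
  -- Step B : the set {u | c ≤ F u} is bounded below when 0 < c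
  have hbdd : ∀ c : ℝ, 0 < c → BddBelow {u : ℝ | c ≤ F u} := by
    intro c hc
    have hinter : ⋂ n : ℕ, Set.Iic (-(n : ℝ)) = ∅ := by
      ext x
      simp only [Set.mem_iInter, Set.mem_Iic, Set.mem_empty_iff_false, iff_false, not_forall]
      obtain ⟨n, hn⟩ := exists_nat_gt (-x)
      exact ⟨n, by push_neg; linarith⟩
    have htend : Filter.Tendsto (μ ∘ fun n : ℕ => Set.Iic (-(n : ℝ)))
        Filter.atTop (𝓝 (μ (⋂ n : ℕ, Set.Iic (-(n : ℝ))))) := by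
      refine tendsto_measure_iInter_atTop (fun n => (measurableSet_Iic).nullMeasurableSet)
        (fun m n hmn => Set.Iic_subset_Iic.2 (by exact_mod_cast neg_le_neg (by exact_mod_cast hmn)))
        ⟨0, hfin _⟩
    rw [hinter, measure_empty] at htend
    have hpos : (0 : ℝ≥0∞) < ENNReal.ofReal c := ENNReal.ofReal_pos.2 hc
    obtain ⟨N, hN⟩ := (htend.eventually (eventually_lt_nhds hpos)).exists
    refine ⟨-(N : ℝ), fun u hu => ?_⟩
    by_contra h
    push_neg at h
    have h1 : μ (Set.Iic u) ≤ μ (Set.Iic (-(N : ℝ))) :=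
      measure_mono (Set.Iic_subset_Iic.2 h.le)
    have h2 : F u < c := by
      rw [hF]
      exact ENNReal.toReal_lt_of_lt_ofReal (lt_of_le_of_lt h1 hN)
    exact absurd hu (by simpa using not_le.2 h2)
  -- Step A : the set {u | c ≤ F u} is nonempty when c < 1
  have hne : ∀ c : ℝ, c < 1 → ({u : ℝ | c ≤ F u}).Nonempty := by
    intro c hc
    have htop : Filter.Tendsto (fun x : ℝ => μ (Set.Iic x)) Filter.atTop (𝓝 (μ Set.univ)) :=
      tendsto_measure_Iic_atTop μ
    rw [measure_univ] at htop
    have hlt : ENNReal.ofReal c < 1 := by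
      rcases le_or_gt c 0 with h | h
      · simpa [ENNReal.ofReal_eq_zero.2 h] using (zero_lt_one : (0:ℝ≥0∞) < 1)
      · rw [← ENNReal.ofReal_one]
        exact (ENNReal.ofReal_lt_ofReal_iff zero_lt_one).2 hc
    obtain ⟨u, hu⟩ := (htop.eventually (eventually_gt_nhds hlt)).exists
    refine ⟨u, ?_⟩
    have := (ENNReal.ofReal_le_iff_le_toReal (hfin _)).1 hu.le
    simpa [hF] using this
  -- Step C : G (pm * t) < xm
  have hC : G (pm * t) < xm := by
    have hlt : pm * t < pm := by nlinarith
    have hUnion : Set.Iio xm = ⋃ n : ℕ, Set.Iic (xm - (1 / ((n : ℝ) + 1))) := by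
      ext x
      simp only [Set.mem_Iio, Set.mem_iUnion, Set.mem_Iic]
      constructor
      · intro hx
        obtain ⟨n, hn⟩ := exists_nat_one_div_lt (sub_pos.2 hx)
        exact ⟨n, by linarith⟩
      · rintro ⟨n, hn⟩
        have : 0 < 1 / ((n : ℝ) + 1) := by positivity
        linarith
    have hdir : Directed (· ⊆ ·) (fun n : ℕ => Set.Iic (xm - (1 / ((n : ℝ) + 1)))) := by
      intro m n
      rcases le_total m n with h | h
      · refine ⟨n, Set.Iic_subset_Iic.2 (by gcongr <;> exact_mod_cast h), subset_rfl⟩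
      · refine ⟨m, subset_rfl, Set.Iic_subset_Iic.2 (by gcongr <;> exact_mod_cast h)⟩
    have hmeas : μ (Set.Iio xm) = ⨆ n : ℕ, μ (Set.Iic (xm - (1 / ((n : ℝ) + 1)))) := by
      rw [hUnion]; exact hdir.measure_iUnion
    have h1 : ENNReal.ofReal (pm * t) < μ (Set.Iio xm) := by
      rw [ENNReal.ofReal_lt_iff_lt_toReal (by positivity) (hfin _), ← hpm]
      exact hlt
    rw [hmeas, lt_iSup_iff] at h1
    obtain ⟨n, hn⟩ := h1
    have hmem : xm - (1 / ((n : ℝ) + 1)) ∈ {u : ℝ | pm * t ≤ F u} := by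
      have := (ENNReal.ofReal_le_iff_le_toReal (hfin _)).1 hn.le
      simpa [hF] using this
    have : G (pm * t) ≤ xm - (1 / ((n : ℝ) + 1)) := by
      rw [hG]
      exact csInf_le (hbdd _ (by positivity)) hmem
    have hpos : 0 < 1 / ((n : ℝ) + 1) := by positivity
    linarith
  -- Step D : xm ≤ G (pm + (1 - pm) * t)
  have hD : xm ≤ G (pm + (1 - pm) * t) := by
    have hc1 : pm + (1 - pm) * t < 1 := by nlinarith
    have hcgt : pm < pm + (1 - pm) * t := by nlinarith
    rw [hG]
    refine le_csInf (hne _ hc1) ?_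
    intro u hu
    by_contra h
    push_neg at h
    have h1 : μ (Set.Iic u) ≤ μ (Set.Iio xm) :=
      measure_mono (fun x hx => lt_of_le_of_lt hx h)
    have h2 : F u ≤ pm := by
      rw [hF, hpm]
      exact ENNReal.toReal_mono (hfin _) h1
    have := hu
    simp only [Set.mem_setOf_eq] at this
    linarith
  exact ⟨⟨hC, hD⟩, by linarith⟩
end
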